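/- arXiv:math/0105002 — 4 statements merged into one kernel-verified Lean document; each statement's English description precedes it below -/
import Mathlib

section
/- The two-variable identity (1 - ab/q) · Σ_{i,j≥0} (-1)^{i+j} a^i b^j q^{C(i,2)+C(j,2)-ij} = 1 + Σ_{n≥1} (-1)^n q^{C(n,2)} (a^n + b^n) holds as formal power series, where C(n,2) = n(n-1)/2. -/
open scoped BigOperators

/-- finite q-Pochhammer symbol `(x;q)_n = ∏_{j=0}^{n-1} (1 - x q^j)` -/
noncomputable def qPoch (x q : ℂ) (n : ℕ) : ℂ := ∏ j ∈ Finset.range n, (1 - x * q ^ j)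

/-- infinite q-Pochhammer symbol `(x;q)_∞ = ∏_{j≥0} (1 - x q^j)` -/
noncomputable def qPochInf (x q : ℂ) : ℂ := ∏' j : ℕ, (1 - x * q ^ j)

/-- Gaussian binomial coefficient in base q, zero outside `0 ≤ k ≤ m`. -/
noncomputable def qbinom (q : ℂ) (m k : ℤ) : ℂ :=
  if 0 ≤ k ∧ k ≤ m then
    qPoch q q m.toNat / (qPoch q q k.toNat * qPoch q q (m - k).toNat)
  else 0

section Aux
open Function Set

noncomputable def myF (q a b : ℂ) (p : ℕ × ℕ) : ℂ :=
  (-1 : ℂ) ^ (p.1 + p.2) * a ^ p.1 * b ^ p.2 *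
    q ^ ((p.1 : ℤ) * (p.1 - 1) / 2 + (p.2 : ℤ) * (p.2 - 1) / 2 - p.1 * p.2)

set_option maxHeartbeats 1000000 in
lemma myF_summable (q a b : ℂ) (hq : ‖q‖ < 1) (hq0 : q ≠ 0)
    (hab : ‖a‖ * ‖b‖ < ‖q‖) : Summable (myF q a b) := by
  have hs0 : 0 < ‖q‖ := norm_pos_iff.mpr hq0
  set s := ‖q‖ with hs
  set r : ℝ := ‖a‖ * ‖b‖ / s with hr
  have hr0 : 0 ≤ r := div_nonneg (by positivity) hs0.le
  have hr1 : r < 1 := (div_lt_one hs0).mpr hab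
  set M : ℝ := max ‖a‖ ‖b‖ with hM
  have hM0 : 0 ≤ M := le_trans (norm_nonneg a) (le_max_left _ _)
  set w : ℕ → ℝ := fun d => M ^ d * s ^ (d * (d - 1) / 2) with hw
  have hw0 : ∀ d, 0 ≤ w d := fun d => by positivity
  have hwsum : Summable w := by
    apply summable_of_ratio_norm_eventually_le (r := 1/2) (by norm_num)
    have h0 : Filter.Tendsto (fun n : ℕ => M * s ^ n) Filter.atTop (nhds 0) := by
      simpa using (tendsto_pow_atTop_nhds_zero_of_lt_one hs0.le hq).const_mul M
    filter_upwards [h0.eventually_le_const (by norm_num : (0:ℝ) < 1/2)] with n hn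
    have hstep : w (n + 1) = (M * s ^ n) * w n := by
      have hdvd : 2 ∣ n * (n - 1) := by
        rcases n with _ | m
        · simp
        · simpa [mul_comm] using (Nat.even_mul_succ_self m).two_dvd
      have hexp : (n + 1) * (n + 1 - 1) = n * (n - 1) + 2 * n := by
        rcases n with _ | m
        · simp
        · simp only [Nat.succ_sub_one]; ring
      have : (n + 1) * (n + 1 - 1) / 2 = n * (n - 1) / 2 + n := by omega
      simp only [hw, this, pow_add, pow_succ]
      ring
    rw [Real.norm_of_nonneg (hw0 _), Real.norm_of_nonneg (hw0 _), hstep]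
    exact mul_le_mul_of_nonneg_right hn (hw0 n)
  have hvsum : Summable (fun d : ℤ => w d.natAbs) := by
    apply Summable.of_nat_of_neg
    · simpa using hwsum
    · simpa using hwsum
  have hu : Summable (fun m : ℕ => r ^ m) := summable_geometric_of_lt_one hr0 hr1
  have hG : Summable (fun x : ℕ × ℤ => r ^ x.1 * w x.2.natAbs) :=
    hu.mul_of_nonneg hvsum (fun m => pow_nonneg hr0 m) (fun d => hw0 _)
  have hφ : Function.Injective (fun p : ℕ × ℕ => ((min p.1 p.2 : ℕ), (p.1 : ℤ) - p.2)) := by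
    rintro ⟨i, j⟩ ⟨i', j'⟩ h
    simp only [Prod.mk.injEq] at h ⊢
    omega
  apply Summable.of_norm_bounded (hG.comp_injective hφ)
  rintro ⟨i, j⟩
  simp only [comp_apply]
  have hnorm : ‖myF q a b (i, j)‖ =
      ‖a‖ ^ i * ‖b‖ ^ j * s ^ ((i : ℤ) * (i - 1) / 2 + (j : ℤ) * (j - 1) / 2 - i * j) := by
    simp [myF, norm_mul, norm_pow, norm_zpow]
    exact Or.inl rfl
  set k : ℕ := ((i : ℤ) - j).natAbs with hk
  set K : ℕ := k * (k - 1) / 2 with hK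
  set m : ℕ := min i j with hmm
  have hdvdZ : ∀ z : ℤ, 2 ∣ z * (z - 1) := fun z => by
    simpa [mul_comm] using (Int.even_mul_succ_self (z - 1)).two_dvd
  have he : (i : ℤ) * ((i:ℤ) - 1) / 2 + (j : ℤ) * ((j:ℤ) - 1) / 2 - (i:ℤ) * (j:ℤ)
      = (K : ℤ) - (m : ℤ) := by
    have hA := Int.ediv_mul_cancel (hdvdZ (i : ℤ))
    have hB := Int.ediv_mul_cancel (hdvdZ (j : ℤ))
    have hKk : 2 * (K : ℤ) = (k : ℤ) * ((k : ℤ) - 1) := by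
      have h1 : 2 * K = k * (k - 1) := by
        have := (by rcases k with _ | m; · simp
                    · simpa [mul_comm] using (Nat.even_mul_succ_self m).two_dvd : 2 ∣ k * (k - 1))
        omega
      have h2 : ((2 * K : ℕ) : ℤ) = ((k * (k - 1) : ℕ) : ℤ) := by rw [h1]
      rcases k with _ | m
      · simpa using h2
      · push_cast [Nat.succ_sub_one] at h2 ⊢
        linarith
    have hkk : (k : ℤ) * (k : ℤ) = ((i : ℤ) - j) * ((i : ℤ) - j) := by
      simp only [hk]
      exact Int.natAbs_mul_self' _
    have hkk' : (k : ℤ) * (k : ℤ) = (i:ℤ)*(i:ℤ) - 2*((i:ℤ)*(j:ℤ)) + (j:ℤ)*(j:ℤ) := by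
      rw [hkk]; ring
    have hm2 : 2 * (m : ℤ) = (i : ℤ) + (j : ℤ) - (k : ℤ) := by
      simp only [hmm, hk]
      omega
    have hA' : 2 * ((i:ℤ) * ((i:ℤ) - 1) / 2) = (i:ℤ)*(i:ℤ) - (i:ℤ) := by
      rw [mul_comm (2 : ℤ), Int.ediv_mul_cancel (hdvdZ _)]; ring
    have hB' : 2 * ((j:ℤ) * ((j:ℤ) - 1) / 2) = (j:ℤ)*(j:ℤ) - (j:ℤ) := by
      rw [mul_comm (2 : ℤ), Int.ediv_mul_cancel (hdvdZ _)]; ring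
    linarith
  rw [hnorm, he, zpow_sub₀ (ne_of_gt hs0), zpow_natCast, zpow_natCast]
  have habk : ‖a‖ ^ i * ‖b‖ ^ j ≤ (‖a‖ * ‖b‖) ^ m * M ^ k := by
    rcases le_total i j with hij | hij
    · obtain ⟨t, rfl⟩ : ∃ t, j = i + t := ⟨j - i, by omega⟩
      have hm' : m = i := by omega
      have hk' : k = t := by simp only [hk]; omega
      rw [hm', hk', pow_add]
      have : ‖b‖ ^ t ≤ M ^ t := pow_le_pow_left₀ (norm_nonneg b) (le_max_right _ _) t
      calc ‖a‖ ^ i * (‖b‖ ^ i * ‖b‖ ^ t) = (‖a‖ * ‖b‖) ^ i * ‖b‖ ^ t := by rw [mul_pow]; ring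
        _ ≤ (‖a‖ * ‖b‖) ^ i * M ^ t := mul_le_mul_of_nonneg_left this (by positivity)
    · obtain ⟨t, rfl⟩ : ∃ t, i = j + t := ⟨i - j, by omega⟩
      have hm' : m = j := by omega
      have hk' : k = t := by simp only [hk]; omega
      rw [hm', hk', pow_add]
      have : ‖a‖ ^ t ≤ M ^ t := pow_le_pow_left₀ (norm_nonneg a) (le_max_left _ _) t
      calc ‖a‖ ^ j * ‖a‖ ^ t * ‖b‖ ^ j = (‖a‖ * ‖b‖) ^ j * ‖a‖ ^ t := by rw [mul_pow]; ring
        _ ≤ (‖a‖ * ‖b‖) ^ j * M ^ t := mul_le_mul_of_nonneg_left this (by positivity)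
  have hwk : w (((i : ℤ) - j).natAbs) = M ^ k * s ^ K := by rw [hw]
  rw [hwk]
  calc ‖a‖ ^ i * ‖b‖ ^ j * (s ^ K / s ^ m)
      ≤ ((‖a‖ * ‖b‖) ^ m * M ^ k) * (s ^ K / s ^ m) := by
        apply mul_le_mul_of_nonneg_right habk
        positivity
    _ = r ^ m * (M ^ k * s ^ K) := by
        rw [hr, div_pow]
        field_simp

lemma half_mul (z : ℤ) : 2 * (z * (z - 1) / 2) = z * (z - 1) :=
  Int.mul_ediv_cancel' (by simpa [mul_comm] using (Int.even_mul_succ_self (z - 1)).two_dvd)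

lemma myF_shift (q a b : ℂ) (hq0 : q ≠ 0) (p : ℕ × ℕ) :
    a * b / q * myF q a b p = myF q a b (p.1 + 1, p.2 + 1) := by
  obtain ⟨i, j⟩ := p
  simp only [myF]
  have he : ((i + 1 : ℕ) : ℤ) * (((i + 1 : ℕ) : ℤ) - 1) / 2
        + ((j + 1 : ℕ) : ℤ) * (((j + 1 : ℕ) : ℤ) - 1) / 2 - ((i + 1 : ℕ) : ℤ) * ((j + 1 : ℕ) : ℤ)
      = ((i : ℤ) * ((i : ℤ) - 1) / 2 + (j : ℤ) * ((j : ℤ) - 1) / 2 - (i : ℤ) * (j : ℤ)) - 1 := by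
    push_cast
    linarith [half_mul ((i : ℤ) + 1), half_mul ((j : ℤ) + 1), half_mul (i : ℤ), half_mul (j : ℤ)]
  rw [he, zpow_sub_one₀ hq0]
  field_simp
  ring

theorem stmt_aux (q a b : ℂ) (hq : ‖q‖ < 1) (hq0 : q ≠ 0)
    (hab : ‖a‖ * ‖b‖ < ‖q‖) :
    (1 - a * b / q) *
      ∑' p : ℕ × ℕ, (-1 : ℂ) ^ (p.1 + p.2) * a ^ p.1 * b ^ p.2 *
        q ^ ((p.1 : ℤ) * (p.1 - 1) / 2 + (p.2 : ℤ) * (p.2 - 1) / 2 - p.1 * p.2)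
      = 1 + ∑' n : ℕ, (-1 : ℂ) ^ (n + 1) * q ^ (n * (n + 1) / 2) *
          (a ^ (n + 1) + b ^ (n + 1)) := by
  have hF : Summable (myF q a b) := myF_summable q a b hq hq0 hab
  set G := myF q a b with hG
  have hshiftinj : Function.Injective (fun p : ℕ × ℕ => (p.1 + 1, p.2 + 1)) := by
    rintro ⟨i, j⟩ ⟨i', j'⟩ h
    simp only [Prod.mk.injEq] at h ⊢
    omega
  have he1inj : Function.Injective (fun i : ℕ => ((i, 0) : ℕ × ℕ)) := by
    intro i i' h; simpa using h
  have he2inj : Function.Injective (fun j : ℕ => ((0, j + 1) : ℕ × ℕ)) := by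
    intro j j' h; simp only [Prod.mk.injEq] at h; omega
  set sI : Set (ℕ × ℕ) := Set.range (fun p : ℕ × ℕ => (p.1 + 1, p.2 + 1)) with hsI
  set s1 : Set (ℕ × ℕ) := Set.range (fun i : ℕ => ((i, 0) : ℕ × ℕ)) with hs1
  set s2 : Set (ℕ × ℕ) := Set.range (fun j : ℕ => ((0, j + 1) : ℕ × ℕ)) with hs2
  have hcompl : sIᶜ = s1 ∪ s2 := by
    ext ⟨i, j⟩
    simp only [hsI, hs1, hs2, Set.mem_compl_iff, Set.mem_range, Set.mem_union, Prod.exists,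
      Prod.mk.injEq, not_exists]
    constructor
    · intro h
      rcases i with _ | i
      · rcases j with _ | j
        · exact Or.inl ⟨0, rfl, rfl⟩
        · exact Or.inr ⟨j, rfl, rfl⟩
      · rcases j with _ | j
        · exact Or.inl ⟨i + 1, rfl, rfl⟩
        · exact absurd ⟨rfl, rfl⟩ (h i j)
    · rintro (⟨x, hx1, hx2⟩ | ⟨x, hx1, hx2⟩) i' j' ⟨h1, h2⟩ <;> omega
  have hdis : Disjoint s1 s2 := by
    rw [Set.disjoint_left]
    rintro p ⟨i, rfl⟩ ⟨j, hj⟩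
    simp only [Prod.mk.injEq] at hj
    omega
  have hsplit := Summable.tsum_subtype_add_tsum_subtype_compl hF sI
  have hI : ∑' (x : sI), G x = ∑' p : ℕ × ℕ, G (p.1 + 1, p.2 + 1) :=
    tsum_range G hshiftinj
  have hC : ∑' (x : ↑sIᶜ), G x = (∑' i : ℕ, G (i, 0)) + ∑' j : ℕ, G (0, j + 1) := by
    rw [hcompl, Summable.tsum_union_disjoint hdis (hF.subtype _) (hF.subtype _),
      tsum_range G he1inj, tsum_range G he2inj]
  have hshiftsum : ∑' p : ℕ × ℕ, G (p.1 + 1, p.2 + 1) = a * b / q * ∑' p : ℕ × ℕ, G p := by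
    rw [← tsum_mul_left]
    exact tsum_congr fun p => (myF_shift q a b hq0 p).symm
  have hsum1 : Summable (fun i : ℕ => G (i, 0)) := hF.comp_injective he1inj
  have hsum1' : Summable (fun i : ℕ => G (i + 1, 0)) := by
    have : Function.Injective (fun i : ℕ => ((i + 1, 0) : ℕ × ℕ)) := by
      intro i i' h; simp only [Prod.mk.injEq] at h; omega
    exact hF.comp_injective this
  have hsum2 : Summable (fun j : ℕ => G (0, j + 1)) := hF.comp_injective he2inj
  have h00 : G (0, 0) = 1 := by simp [hG, myF]
  have hterm : ∀ n : ℕ, G (n + 1, 0) + G (0, n + 1)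
      = (-1 : ℂ) ^ (n + 1) * q ^ (n * (n + 1) / 2) * (a ^ (n + 1) + b ^ (n + 1)) := by
    intro n
    have hcast : ((n * (n + 1) / 2 : ℕ) : ℤ) = (n : ℤ) * ((n : ℤ) + 1) / 2 := by
      have h1 : 2 ∣ n * (n + 1) := (Nat.even_mul_succ_self n).two_dvd
      have h2 : ((n * (n + 1) : ℕ) : ℤ) = (n : ℤ) * ((n : ℤ) + 1) := by push_cast; ring
      omega
    have hE1 : ((n + 1 : ℕ) : ℤ) * (((n + 1 : ℕ) : ℤ) - 1) / 2
          + ((0 : ℕ) : ℤ) * (((0 : ℕ) : ℤ) - 1) / 2 - ((n + 1 : ℕ) : ℤ) * ((0 : ℕ) : ℤ)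
        = ((n * (n + 1) / 2 : ℕ) : ℤ) := by
      rw [hcast]
      push_cast
      have h1 := half_mul ((n : ℤ) + 1)
      have h2 : 2 * ((n : ℤ) * ((n : ℤ) + 1) / 2) = (n : ℤ) * ((n : ℤ) + 1) := by
        rw [mul_comm ((n : ℤ)) ((n : ℤ) + 1)]
        simpa [mul_comm] using half_mul ((n : ℤ) + 1)
      linarith
    have hE2 : ((0 : ℕ) : ℤ) * (((0 : ℕ) : ℤ) - 1) / 2
          + ((n + 1 : ℕ) : ℤ) * (((n + 1 : ℕ) : ℤ) - 1) / 2 - ((0 : ℕ) : ℤ) * ((n + 1 : ℕ) : ℤ)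
        = ((n * (n + 1) / 2 : ℕ) : ℤ) := by
      rw [hcast]
      push_cast
      have h2 : 2 * ((n : ℤ) * ((n : ℤ) + 1) / 2) = (n : ℤ) * ((n : ℤ) + 1) := by
        rw [mul_comm ((n : ℤ)) ((n : ℤ) + 1)]
        simpa [mul_comm] using half_mul ((n : ℤ) + 1)
      linarith [half_mul ((n : ℤ) + 1)]
    simp only [hG, myF]
    rw [hE1, hE2, zpow_natCast]
    ring
  calc (1 - a * b / q) * ∑' p : ℕ × ℕ, G p
      = (∑' p : ℕ × ℕ, G p) - a * b / q * ∑' p : ℕ × ℕ, G p := by ring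
    _ = (∑' p : ℕ × ℕ, G p) - ∑' p : ℕ × ℕ, G (p.1 + 1, p.2 + 1) := by rw [hshiftsum]
    _ = ∑' (x : ↑sIᶜ), G x := by rw [← hsplit, ← hI]; ring
    _ = (∑' i : ℕ, G (i, 0)) + ∑' j : ℕ, G (0, j + 1) := hC
    _ = (G (0, 0) + ∑' i : ℕ, G (i + 1, 0)) + ∑' j : ℕ, G (0, j + 1) := by
        rw [Summable.tsum_eq_zero_add hsum1]
    _ = 1 + ((∑' i : ℕ, G (i + 1, 0)) + ∑' j : ℕ, G (0, j + 1)) := by rw [h00]; ring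
    _ = 1 + ∑' n : ℕ, (G (n + 1, 0) + G (0, n + 1)) := by rw [Summable.tsum_add hsum1' hsum2]
    _ = 1 + ∑' n : ℕ, (-1 : ℂ) ^ (n + 1) * q ^ (n * (n + 1) / 2) *
          (a ^ (n + 1) + b ^ (n + 1)) := by rw [tsum_congr hterm]

end Aux

/-- The two-variable identity \eqref{ijn}. -/
theorem stmt_1 (q a b : ℂ) (hq : ‖q‖ < 1) (hq0 : q ≠ 0)
    (hab : ‖a‖ * ‖b‖ < ‖q‖) :
    (1 - a * b / q) *
      ∑' p : ℕ × ℕ, (-1 : ℂ) ^ (p.1 + p.2) * a ^ p.1 * b ^ p.2 *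
        q ^ ((p.1 : ℤ) * (p.1 - 1) / 2 + (p.2 : ℤ) * (p.2 - 1) / 2 - p.1 * p.2)
      = 1 + ∑' n : ℕ, (-1 : ℂ) ^ (n + 1) * q ^ (n * (n + 1) / 2) *
          (a ^ (n + 1) + b ^ (n + 1)) := stmt_aux q a b hq hq0 hab
end

section
/- Σ_{n≥0} (q;q^2)_n q^n / ((-q;q)_n (q^2;q)_n) = 2 − (q;q^2)_∞ / (q^2;q^2)_∞, for |q|<1. -/
open scoped BigOperators

open Filter Finset Complex Topology

lemma aux_one_sub_ne {a : ℂ} (h : ‖a‖ < 1) : (1 : ℂ) - a ≠ 0 := by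
  intro h0
  have : a = 1 := by linear_combination -h0
  rw [this] at h
  simp at h

lemma aux_fac_ne {x Q : ℂ} (hx : ‖x‖ < 1) (hQ : ‖Q‖ ≤ 1) (j : ℕ) : 1 - x * Q ^ j ≠ 0 := by
  apply aux_one_sub_ne
  calc ‖x * Q ^ j‖ = ‖x‖ * ‖Q‖ ^ j := by rw [norm_mul, norm_pow]
    _ ≤ ‖x‖ := mul_le_of_le_one_right (norm_nonneg x) (pow_le_one₀ (norm_nonneg Q) hQ)
    _ < 1 := hx

lemma aux_qPoch_ne {x Q : ℂ} (hx : ‖x‖ < 1) (hQ : ‖Q‖ ≤ 1) (n : ℕ) : qPoch x Q n ≠ 0 :=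
  Finset.prod_ne_zero_iff.mpr fun j _ => aux_fac_ne hx hQ j

lemma aux_qPoch_succ (x Q : ℂ) (n : ℕ) :
    qPoch x Q (n + 1) = qPoch x Q n * (1 - x * Q ^ n) := Finset.prod_range_succ _ _

lemma aux_summable_log {x Q : ℂ} (hx : ‖x‖ < 1) (hQ : ‖Q‖ < 1) :
    Summable fun j : ℕ => Complex.log (1 - x * Q ^ j) := by
  have hg : Summable (fun j : ℕ => (3 / 2 : ℝ) * (‖x‖ * ‖Q‖ ^ j)) :=
    ((summable_geometric_of_lt_one (norm_nonneg Q) hQ).mul_left ‖x‖).mul_left _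
  apply Summable.of_norm_bounded_eventually hg
  rw [Nat.cofinite_eq_atTop]
  have h0 : Tendsto (fun j : ℕ => ‖x‖ * ‖Q‖ ^ j) atTop (𝓝 0) := by
    have : ‖‖Q‖‖ < 1 := by rwa [Real.norm_eq_abs, _root_.abs_of_nonneg (norm_nonneg Q)]
    simpa using (tendsto_pow_atTop_nhds_zero_of_norm_lt_one this).const_mul ‖x‖
  filter_upwards [h0.eventually (eventually_le_nhds (by norm_num : (0:ℝ) < 1/2))] with j hj
  have hz : ‖-(x * Q ^ j)‖ ≤ 1 / 2 := by
    rw [norm_neg, norm_mul, norm_pow]; exact hj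
  have := Complex.norm_log_one_add_half_le_self hz
  rw [show (1 : ℂ) + -(x * Q ^ j) = 1 - x * Q ^ j by ring] at this
  calc ‖Complex.log (1 - x * Q ^ j)‖ ≤ 3 / 2 * ‖-(x * Q ^ j)‖ := this
    _ = 3 / 2 * (‖x‖ * ‖Q‖ ^ j) := by rw [norm_neg, norm_mul, norm_pow]

lemma aux_hasProd {x Q : ℂ} (hx : ‖x‖ < 1) (hQ : ‖Q‖ < 1) :
    HasProd (fun j : ℕ => 1 - x * Q ^ j) (qPochInf x Q) ∧ qPochInf x Q ≠ 0 := by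
  have hs := aux_summable_log hx hQ
  have hne := fun j => aux_fac_ne hx hQ.le j
  have hm : Multipliable (fun j : ℕ => 1 - x * Q ^ j) :=
    Complex.multipliable_of_summable_log hs
  constructor
  · exact hm.hasProd
  · have h := Complex.cexp_tsum_eq_tprod (f := fun j : ℕ => 1 - x * Q ^ j) hne hs
    rw [qPochInf, ← h]
    exact Complex.exp_ne_zero _

lemma aux_tendsto_qPoch {x Q : ℂ} (hx : ‖x‖ < 1) (hQ : ‖Q‖ < 1) :
    Tendsto (fun n => qPoch x Q n) atTop (𝓝 (qPochInf x Q)) :=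
  (aux_hasProd hx hQ).1.tendsto_prod_nat

/-- key denominator identity: (1-q)·(-q;q)_n (q²;q)_n = (q²;q²)_n (1-q^{n+1}) -/
lemma aux_hD (q : ℂ) (n : ℕ) :
    (1 - q) * (qPoch (-q) q n * qPoch (q ^ 2) q n)
      = qPoch (q ^ 2) (q ^ 2) n * (1 - q ^ (n + 1)) := by
  induction n with
  | zero => norm_num [qPoch]
  | succ n ih =>
      rw [aux_qPoch_succ, aux_qPoch_succ, aux_qPoch_succ]
      linear_combination ((1 - -q * q ^ n) * (1 - q ^ 2 * q ^ n)) * ih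

noncomputable def Rfun (q : ℂ) (n : ℕ) : ℂ :=
  (1 + q ^ n) * qPoch q (q ^ 2) n / qPoch (q ^ 2) (q ^ 2) n

lemma aux_key (q : ℂ) (hq : ‖q‖ < 1) (n : ℕ) :
    qPoch q (q ^ 2) n * q ^ n / (qPoch (-q) q n * qPoch (q ^ 2) q n)
      = Rfun q n - Rfun q (n + 1) := by
  have hq2 : ‖q ^ 2‖ < 1 := by
    rw [norm_pow]
    exact pow_lt_one₀ (norm_nonneg q) hq (by norm_num)
  have hB : qPoch (q ^ 2) (q ^ 2) n ≠ 0 := aux_qPoch_ne hq2 hq2.le n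
  have hD1 : qPoch (-q) q n ≠ 0 := aux_qPoch_ne (by simpa using hq) hq.le n
  have hD2 : qPoch (q ^ 2) q n ≠ 0 := aux_qPoch_ne hq2 hq.le n
  have h1 : (1 : ℂ) - q ^ (n + 1) ≠ 0 := by
    apply aux_one_sub_ne
    rw [norm_pow]
    exact pow_lt_one₀ (norm_nonneg q) hq (by norm_num)
  have h2 : (1 : ℂ) - q ^ 2 * (q ^ 2) ^ n ≠ 0 := by
    apply aux_one_sub_ne
    rw [show q ^ 2 * (q ^ 2) ^ n = (q ^ 2) ^ (n + 1) by ring, norm_pow]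
    exact pow_lt_one₀ (norm_nonneg _) hq2 (by norm_num)
  have e1 : qPoch q (q ^ 2) n * q ^ n / (qPoch (-q) q n * qPoch (q ^ 2) q n)
      = qPoch q (q ^ 2) n * q ^ n * (1 - q)
        / (qPoch (q ^ 2) (q ^ 2) n * (1 - q ^ (n + 1))) := by
    rw [div_eq_div_iff (mul_ne_zero hD1 hD2) (mul_ne_zero hB h1)]
    linear_combination (-(qPoch q (q ^ 2) n * q ^ n)) * aux_hD q n
  rw [e1, Rfun, Rfun, aux_qPoch_succ, aux_qPoch_succ]
  rw [div_sub_div _ _ hB (mul_ne_zero hB h2),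
    div_eq_div_iff (mul_ne_zero hB h1) (mul_ne_zero hB (mul_ne_zero hB h2))]
  ring
  
lemma aux_psum (q : ℂ) (hq : ‖q‖ < 1) (N : ℕ) :
    ∑ k ∈ Finset.range N,
        qPoch q (q ^ 2) k * q ^ k / (qPoch (-q) q k * qPoch (q ^ 2) q k)
      = 2 - Rfun q N := by
  induction N with
  | zero => norm_num [Rfun, qPoch]
  | succ n ih => rw [Finset.sum_range_succ, ih, aux_key q hq n]; ring

/-- The elegant summation following \eqref{nNB}. -/
theorem stmt_11 (q : ℂ) (hq : ‖q‖ < 1) :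
    ∑' n : ℕ, qPoch q (q ^ 2) n * q ^ n / (qPoch (-q) q n * qPoch (q ^ 2) q n)
      = 2 - qPochInf q (q ^ 2) / qPochInf (q ^ 2) (q ^ 2) := by
  have hq2 : ‖q ^ 2‖ < 1 := by
    rw [norm_pow]
    exact pow_lt_one₀ (norm_nonneg q) hq (by norm_num)
  have hnq : ‖-q‖ < 1 := by simpa using hq
  -- limits of the finite products
  have tA := aux_tendsto_qPoch hq hq2
  have hBinf := aux_hasProd hq2 hq2
  have tB := aux_tendsto_qPoch hq2 hq2
  have tD1 := aux_tendsto_qPoch hnq hq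
  have tD2 := aux_tendsto_qPoch hq2 hq
  have hD1inf := (aux_hasProd hnq hq).2
  have hD2inf := (aux_hasProd hq2 hq).2
  -- limit of Rfun
  have tpow : Tendsto (fun n : ℕ => q ^ n) atTop (𝓝 0) :=
    tendsto_pow_atTop_nhds_zero_of_norm_lt_one hq
  have tR : Tendsto (Rfun q) atTop
      (𝓝 (qPochInf q (q ^ 2) / qPochInf (q ^ 2) (q ^ 2))) := by
    have h : Tendsto (fun n : ℕ => (1 + q ^ n) * qPoch q (q ^ 2) n / qPoch (q ^ 2) (q ^ 2) n)
        atTop (𝓝 ((1 + 0) * qPochInf q (q ^ 2) / qPochInf (q ^ 2) (q ^ 2))) :=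
      Tendsto.div ((tendsto_const_nhds.add tpow).mul tA) tB hBinf.2
    simp only [add_zero, one_mul] at h
    exact h
  -- summability
  have tg : Tendsto (fun n => qPoch q (q ^ 2) n / (qPoch (-q) q n * qPoch (q ^ 2) q n))
      atTop (𝓝 (qPochInf q (q ^ 2) / (qPochInf (-q) q * qPochInf (q ^ 2) q))) :=
    tA.div (tD1.mul tD2) (mul_ne_zero hD1inf hD2inf)
  have hO : (fun n : ℕ => qPoch q (q ^ 2) n / (qPoch (-q) q n * qPoch (q ^ 2) q n) * q ^ n)
      =O[atTop] (fun n : ℕ => (1 : ℝ) * ‖q‖ ^ n) :=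
    (tg.isBigO_one ℝ).mul (Asymptotics.isBigO_of_le _ (fun n => by
      rw [norm_pow, Real.norm_eq_abs]
      exact le_abs_self _))
  have hsummable0 : Summable
      (fun n : ℕ => qPoch q (q ^ 2) n / (qPoch (-q) q n * qPoch (q ^ 2) q n) * q ^ n) := by
    apply summable_of_isBigO_nat _ hO
    exact (summable_geometric_of_lt_one (norm_nonneg q) hq).mul_left 1
  have hsummable : Summable
      (fun n : ℕ => qPoch q (q ^ 2) n * q ^ n / (qPoch (-q) q n * qPoch (q ^ 2) q n)) := by
    apply hsummable0.congr
    intro n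
    rw [mul_div_right_comm]
  -- assemble
  have hsum : HasSum
      (fun n : ℕ => qPoch q (q ^ 2) n * q ^ n / (qPoch (-q) q n * qPoch (q ^ 2) q n))
      (2 - qPochInf q (q ^ 2) / qPochInf (q ^ 2) (q ^ 2)) := by
    rw [hsummable.hasSum_iff_tendsto_nat]
    have : (fun N : ℕ => ∑ k ∈ Finset.range N,
        qPoch q (q ^ 2) k * q ^ k / (qPoch (-q) q k * qPoch (q ^ 2) q k))
        = fun N => 2 - Rfun q N := funext (aux_psum q hq)
    rw [this]
    exact tendsto_const_nhds.sub tR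
  exact hsum.tsum_eq
end

section
/- Σ_{n≥0} (q;q^2)_n (aq;q^2)_n (aq)^n / (-aq;q)_{2n+1} = Σ_{n≥0} (-1)^n a^n q^{n(n+1)}, for |q|<1 and |a| suitably small (formal power series in a, q). -/
open scoped BigOperators

namespace Stmt15

/-- summand of the LHS series -/
noncomputable def Tt (q b : ℂ) (n : ℕ) : ℂ :=
  qPoch q (q ^ 2) n * qPoch (b * q) (q ^ 2) n * (b * q) ^ n /
    qPoch (-(b * q)) q (2 * n + 1)

/-- the telescoping term -/
noncomputable def Gg (q b : ℂ) (n : ℕ) : ℂ :=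
  (b * q) ^ n * qPoch q (q ^ 2) n * qPoch (b * q) (q ^ 2) n * (1 - b ^ 2 * q ^ (2 * n + 2)) /
    ((1 - b * q) * qPoch (-(b * q)) q (2 * n + 1))

lemma one_add_ne {c : ℂ} (h : ‖c‖ < 1) : (1 : ℂ) + c ≠ 0 := by
  intro hc
  have : c = -1 := by linear_combination hc
  rw [this] at h; simp at h

lemma one_sub_ne {c : ℂ} (h : ‖c‖ < 1) : (1 : ℂ) - c ≠ 0 := by
  intro hc
  have : c = 1 := by linear_combination -hc
  rw [this] at h; simp at h

lemma norm_mul_pow_lt {b q : ℂ} (hb : ‖b‖ < 1) (hq : ‖q‖ < 1) (k : ℕ) :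
    ‖b * q ^ k‖ < 1 := by
  rw [norm_mul, norm_pow]
  calc ‖b‖ * ‖q‖ ^ k ≤ ‖b‖ * 1 := by
        refine mul_le_mul_of_nonneg_left ?_ (norm_nonneg b)
        exact pow_le_one₀ (norm_nonneg q) hq.le
    _ < 1 := by simpa using hb

lemma qPoch_ne {b q : ℂ} (hb : ‖b‖ < 1) (hq : ‖q‖ < 1) (m : ℕ) :
    qPoch (-(b * q)) q m ≠ 0 := by
  refine Finset.prod_ne_zero_iff.mpr fun j _ => ?_
  have : (1 : ℂ) - -(b * q) * q ^ j = 1 + b * q ^ (j + 1) := by ring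
  rw [this]
  exact one_add_ne (norm_mul_pow_lt hb hq (j + 1))

lemma qPoch_succ (x q : ℂ) (n : ℕ) :
    qPoch x q (n + 1) = qPoch x q n * (1 - x * q ^ n) := Finset.prod_range_succ _ _

lemma qPoch_succ' (x q : ℂ) (n : ℕ) :
    qPoch x q (n + 1) = (1 - x) * qPoch (x * q) q n := by
  rw [qPoch, Finset.prod_range_succ']
  simp only [pow_zero, mul_one, qPoch]
  rw [mul_comm]
  congr 1
  exact Finset.prod_congr rfl fun j _ => by ring


lemma step {q b : ℂ} (hq : ‖q‖ < 1) (hb : ‖b‖ < 1) (n : ℕ) :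
    Tt q b n + b * q ^ 2 * Tt q (b * q ^ 2) n = Gg q b n - Gg q b (n + 1) := by
  set A := qPoch q (q ^ 2) n with hA
  set B := qPoch (b * q) (q ^ 2) n with hB
  set D := qPoch (-(b * q)) q (2 * n + 1) with hD
  have hne1 : (1 : ℂ) - b * q ≠ 0 := by
    have := norm_mul_pow_lt hb hq 1; rw [pow_one] at this; exact one_sub_ne this
  have hne2 : (1 : ℂ) + b * q ≠ 0 := by
    have := norm_mul_pow_lt hb hq 1; rw [pow_one] at this; exact one_add_ne this
  have hne3 : (1 : ℂ) + b * q ^ 2 ≠ 0 := one_add_ne (norm_mul_pow_lt hb hq 2)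
  have hne4 : (1 : ℂ) + b * q ^ (2 * n + 2) ≠ 0 := one_add_ne (norm_mul_pow_lt hb hq _)
  have hne5 : (1 : ℂ) + b * q ^ (2 * n + 3) ≠ 0 := one_add_ne (norm_mul_pow_lt hb hq _)
  have hneD : D ≠ 0 := qPoch_ne hb hq _
  have hX : qPoch (b * q ^ 2 * q) (q ^ 2) n = B * (1 - b * q * (q ^ 2) ^ n) / (1 - b * q) := by
    rw [eq_div_iff hne1]
    have h1 := qPoch_succ' (b * q) (q ^ 2) n
    have h2 := qPoch_succ (b * q) (q ^ 2) n
    have harg : b * q * q ^ 2 = b * q ^ 2 * q := by ring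
    rw [harg] at h1
    rw [← hB] at h2
    rw [h2] at h1
    linear_combination -h1
  have hD3 : qPoch (-(b * q)) q (2 * n + 3) =
      D * ((1 + b * q ^ (2 * n + 2)) * (1 + b * q ^ (2 * n + 3))) := by
    have e1 : 2 * n + 3 = (2 * n + 1) + 1 + 1 := by ring
    rw [e1, qPoch_succ, qPoch_succ, ← hD]
    ring
  have hY : qPoch (-(b * q ^ 2 * q)) q (2 * n + 1) =
      D * ((1 + b * q ^ (2 * n + 2)) * (1 + b * q ^ (2 * n + 3))) /
        ((1 + b * q) * (1 + b * q ^ 2)) := by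
    rw [eq_div_iff (mul_ne_zero hne2 hne3)]
    have e2 : 2 * n + 3 = (2 * n + 2) + 1 := by ring
    have h1 : qPoch (-(b * q)) q (2 * n + 3)
        = (1 + b * q) * qPoch (-(b * q ^ 2)) q (2 * n + 2) := by
      rw [e2, qPoch_succ']
      have harg : -(b * q) * q = -(b * q ^ 2) := by ring
      rw [harg]; ring
    have h2 : qPoch (-(b * q ^ 2)) q (2 * n + 2)
        = (1 + b * q ^ 2) * qPoch (-(b * q ^ 2 * q)) q (2 * n + 1) := by
      have e3 : 2 * n + 2 = (2 * n + 1) + 1 := by ring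
      rw [e3, qPoch_succ']
      have harg : -(b * q ^ 2) * q = -(b * q ^ 2 * q) := by ring
      rw [harg]; ring
    rw [h2] at h1
    rw [hD3] at h1
    linear_combination -h1
  have hT2 : Tt q (b * q ^ 2) n =
      A * B * (1 - b * q * (q ^ 2) ^ n) * (b * q ^ 2 * q) ^ n * ((1 + b * q) * (1 + b * q ^ 2)) /
        ((1 - b * q) * (D * ((1 + b * q ^ (2 * n + 2)) * (1 + b * q ^ (2 * n + 3))))) := by
    unfold Tt
    rw [← hA, hX, hY]
    field_simp
  have hDel : (1 - b * q) * (D * ((1 + b * q ^ (2 * n + 2)) * (1 + b * q ^ (2 * n + 3)))) ≠ 0 :=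
    mul_ne_zero hne1 (mul_ne_zero hneD (mul_ne_zero hne4 hne5))
  have hT1 : Tt q b n =
      A * B * (b * q) ^ n * ((1 - b * q) * ((1 + b * q ^ (2 * n + 2)) * (1 + b * q ^ (2 * n + 3)))) /
        ((1 - b * q) * (D * ((1 + b * q ^ (2 * n + 2)) * (1 + b * q ^ (2 * n + 3))))) := by
    unfold Tt
    rw [← hA, ← hB, ← hD, div_eq_div_iff hneD hDel]
    ring
  have hG : Gg q b n =
      (b * q) ^ n * A * B * (1 - b ^ 2 * q ^ (2 * n + 2)) *
          ((1 + b * q ^ (2 * n + 2)) * (1 + b * q ^ (2 * n + 3))) /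
        ((1 - b * q) * (D * ((1 + b * q ^ (2 * n + 2)) * (1 + b * q ^ (2 * n + 3))))) := by
    unfold Gg
    rw [← hA, ← hB, ← hD, div_eq_div_iff (mul_ne_zero hne1 hneD) hDel]
    ring
  have hG1 : Gg q b (n + 1) =
      (b * q) ^ (n + 1) * (A * (1 - q * (q ^ 2) ^ n)) * (B * (1 - b * q * (q ^ 2) ^ n)) *
          (1 - b ^ 2 * q ^ (2 * (n + 1) + 2)) /
        ((1 - b * q) * (D * ((1 + b * q ^ (2 * n + 2)) * (1 + b * q ^ (2 * n + 3))))) := by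
    unfold Gg
    have e4 : 2 * (n + 1) + 1 = 2 * n + 3 := by ring
    rw [e4, hD3, qPoch_succ q (q ^ 2) n, qPoch_succ (b * q) (q ^ 2) n, ← hA, ← hB,
      div_eq_div_iff hDel hDel]
    try ring
  rw [hT1, hT2, hG, hG1, ← mul_div_assoc, ← add_div, div_sub_div_same]
  congr 1
  ring

lemma Gg_zero {q b : ℂ} (hq : ‖q‖ < 1) (hb : ‖b‖ < 1) : Gg q b 0 = 1 := by
  have hne1 : (1 : ℂ) - b * q ≠ 0 := by
    have := norm_mul_pow_lt hb hq 1; rw [pow_one] at this; exact one_sub_ne this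
  have hne2 : (1 : ℂ) + b * q ≠ 0 := by
    have := norm_mul_pow_lt hb hq 1; rw [pow_one] at this; exact one_add_ne this
  have h1 : qPoch (-(b * q)) q (2 * 0 + 1) = 1 + b * q := by
    simp [qPoch]
  have h2 : qPoch q (q ^ 2) 0 = 1 := by simp [qPoch]
  have h3 : qPoch (b * q) (q ^ 2) 0 = 1 := by simp [qPoch]
  rw [Gg, h1, h2, h3]
  rw [div_eq_one_iff_eq (mul_ne_zero hne1 hne2)]
  ring

lemma partial_sum {q b : ℂ} (hq : ‖q‖ < 1) (hb : ‖b‖ < 1) (N : ℕ) :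
    ∑ n ∈ Finset.range N, (Tt q b n + b * q ^ 2 * Tt q (b * q ^ 2) n) = 1 - Gg q b N := by
  rw [Finset.sum_congr rfl fun n _ => step hq hb n, Finset.sum_range_sub' (Gg q b),
    Gg_zero hq hb]

lemma sum_pow_le {t : ℝ} (h0 : 0 ≤ t) (h1 : t < 1) (n : ℕ) :
    ∑ j ∈ Finset.range n, t ^ j ≤ (1 - t)⁻¹ := by
  have hs : Summable fun j : ℕ => t ^ j := summable_geometric_of_lt_one h0 h1
  calc ∑ j ∈ Finset.range n, t ^ j ≤ ∑' j : ℕ, t ^ j :=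
        Summable.sum_le_tsum _ (fun i _ => pow_nonneg h0 i) hs
    _ = (1 - t)⁻¹ := tsum_geometric_of_lt_one h0 h1

lemma norm_qPoch_le {x Q : ℂ} (hQ : ‖Q‖ < 1) (hx : ‖x‖ ≤ 1) (n : ℕ) :
    ‖qPoch x Q n‖ ≤ Real.exp ((1 - ‖Q‖)⁻¹) := by
  rw [qPoch, norm_prod]
  calc ∏ j ∈ Finset.range n, ‖1 - x * Q ^ j‖
      ≤ ∏ j ∈ Finset.range n, Real.exp (‖Q‖ ^ j) := by
        refine Finset.prod_le_prod (fun j _ => norm_nonneg _) (fun j _ => ?_)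
        calc ‖1 - x * Q ^ j‖ ≤ ‖(1 : ℂ)‖ + ‖x * Q ^ j‖ := norm_sub_le _ _
          _ ≤ 1 + ‖Q‖ ^ j := by
              rw [norm_one, norm_mul, norm_pow]
              have : ‖x‖ * ‖Q‖ ^ j ≤ 1 * ‖Q‖ ^ j :=
                mul_le_mul_of_nonneg_right hx (pow_nonneg (norm_nonneg Q) j)
              linarith
          _ ≤ Real.exp (‖Q‖ ^ j) := by
              have := Real.add_one_le_exp (‖Q‖ ^ j); linarith
    _ = Real.exp (∑ j ∈ Finset.range n, ‖Q‖ ^ j) := (Real.exp_sum _ _).symm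
    _ ≤ Real.exp ((1 - ‖Q‖)⁻¹) := Real.exp_le_exp.2 (sum_pow_le (norm_nonneg Q) hQ n)

lemma exp_le_one_sub {x ρ : ℝ} (hx0 : 0 ≤ x) (hxρ : x ≤ ρ) (hρ : ρ < 1) :
    Real.exp (-((1 - ρ)⁻¹ * x)) ≤ 1 - x := by
  set c := (1 - ρ)⁻¹ with hc
  have hρ1 : (0:ℝ) < 1 - ρ := by linarith
  have hc1 : c * (1 - ρ) = 1 := inv_mul_cancel₀ (ne_of_gt hρ1)
  have hc0 : 0 < c := inv_pos.2 hρ1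
  have h1 : c * x + 1 ≤ Real.exp (c * x) := Real.add_one_le_exp _
  have key : 1 ≤ (1 - x) * Real.exp (c * x) := by
    have h2 : (1:ℝ) ≤ (1 - x) * (c * x + 1) := by
      have h9 : c * (1 - ρ) ≤ c * (1 - x) :=
        mul_le_mul_of_nonneg_left (by linarith) hc0.le
      nlinarith
    have h3 : 0 ≤ 1 - x := by linarith
    nlinarith
  have h3 : Real.exp (-(c * x)) * Real.exp (c * x) = 1 := by
    rw [← Real.exp_add]; simp
  nlinarith [Real.exp_pos (c * x), Real.exp_pos (-(c * x))]

lemma norm_qPoch_ge {b q : ℂ} {ρ : ℝ} (hq : ‖q‖ < 1) (hρ : ρ < 1) (hb : ‖b‖ ≤ ρ) (m : ℕ) :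
    Real.exp (-((1 - ρ)⁻¹ * (1 - ‖q‖)⁻¹)) ≤ ‖qPoch (-(b * q)) q m‖ := by
  have hρ0 : 0 ≤ ρ := le_trans (norm_nonneg b) hb
  have ht0 : 0 ≤ ‖q‖ := norm_nonneg q
  rw [qPoch, norm_prod]
  have step1 : ∀ j, Real.exp (-((1 - ρ)⁻¹ * (ρ * ‖q‖ ^ j))) ≤ ‖1 - -(b * q) * q ^ j‖ := by
    intro j
    have hx0 : (0:ℝ) ≤ ρ * ‖q‖ ^ j := mul_nonneg hρ0 (pow_nonneg ht0 j)
    have hxρ : ρ * ‖q‖ ^ j ≤ ρ := by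
      have : ‖q‖ ^ j ≤ 1 := pow_le_one₀ ht0 hq.le
      nlinarith
    have h1 : ‖-(b * q) * q ^ j‖ ≤ ρ * ‖q‖ ^ j := by
      rw [norm_mul, norm_neg, norm_mul, norm_pow]
      have h2 : ‖b‖ * ‖q‖ ≤ ρ * 1 := by
        have := mul_le_mul hb hq.le ht0 hρ0
        nlinarith
      nlinarith [pow_nonneg ht0 j, mul_le_mul_of_nonneg_right h2 (pow_nonneg ht0 j)]
    calc Real.exp (-((1 - ρ)⁻¹ * (ρ * ‖q‖ ^ j))) ≤ 1 - ρ * ‖q‖ ^ j :=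
          exp_le_one_sub hx0 hxρ hρ
      _ ≤ 1 - ‖-(b * q) * q ^ j‖ := by linarith
      _ ≤ ‖1 - -(b * q) * q ^ j‖ := by
          have := norm_sub_norm_le (1 : ℂ) (-(b * q) * q ^ j)
          simpa using this
  calc Real.exp (-((1 - ρ)⁻¹ * (1 - ‖q‖)⁻¹))
      ≤ Real.exp (∑ j ∈ Finset.range m, -((1 - ρ)⁻¹ * (ρ * ‖q‖ ^ j))) := by
        apply Real.exp_le_exp.2
        rw [show (∑ j ∈ Finset.range m, -((1 - ρ)⁻¹ * (ρ * ‖q‖ ^ j)))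
            = -(∑ j ∈ Finset.range m, ((1 - ρ)⁻¹ * (ρ * ‖q‖ ^ j))) from by simp]
        have h4 : ∑ j ∈ Finset.range m, (1 - ρ)⁻¹ * (ρ * ‖q‖ ^ j)
            ≤ (1 - ρ)⁻¹ * (1 - ‖q‖)⁻¹ := by
          rw [← Finset.mul_sum, ← Finset.mul_sum]
          have h5 : ∑ j ∈ Finset.range m, ‖q‖ ^ j ≤ (1 - ‖q‖)⁻¹ := sum_pow_le ht0 hq m
          have h6 : (0:ℝ) ≤ (1 - ρ)⁻¹ := le_of_lt (inv_pos.2 (by linarith))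
          have h7 : (0:ℝ) ≤ ∑ j ∈ Finset.range m, ‖q‖ ^ j :=
            Finset.sum_nonneg fun j _ => pow_nonneg ht0 j
          have h8 : (0:ℝ) ≤ (1 - ‖q‖)⁻¹ := le_trans h7 h5
          have h9 : ρ * ∑ j ∈ Finset.range m, ‖q‖ ^ j ≤ (1 - ‖q‖)⁻¹ := by nlinarith
          exact mul_le_mul_of_nonneg_left h9 h6
        linarith [h4]
      _ = ∏ j ∈ Finset.range m, Real.exp (-((1 - ρ)⁻¹ * (ρ * ‖q‖ ^ j))) := Real.exp_sum _ _
      _ ≤ ∏ j ∈ Finset.range m, ‖1 - -(b * q) * q ^ j‖ :=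
          Finset.prod_le_prod (fun j _ => (Real.exp_pos _).le) (fun j _ => step1 j)

noncomputable def Ecst (q : ℂ) : ℝ := Real.exp ((1 - ‖q ^ 2‖)⁻¹)

noncomputable def Dcst (q : ℂ) (ρ : ℝ) : ℝ := Real.exp (-((1 - ρ)⁻¹ * (1 - ‖q‖)⁻¹))

lemma hq2 {q : ℂ} (hq : ‖q‖ < 1) : ‖q ^ 2‖ < 1 := by
  rw [norm_pow]
  calc ‖q‖ ^ 2 ≤ ‖q‖ * 1 := by nlinarith [norm_nonneg q]
    _ < 1 := by simpa using hq

lemma norm_Tt_le {q b : ℂ} {ρ : ℝ} (hq : ‖q‖ < 1) (hρ : ρ < 1) (hb : ‖b‖ ≤ ρ) (n : ℕ) :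
    ‖Tt q b n‖ ≤ Ecst q ^ 2 / Dcst q ρ * ρ ^ n := by
  have hρ0 : 0 ≤ ρ := le_trans (norm_nonneg b) hb
  have ht0 : 0 ≤ ‖q‖ := norm_nonneg q
  have hbq : ‖b * q‖ ≤ ρ := by
    rw [norm_mul]
    nlinarith [norm_nonneg b, mul_le_mul_of_nonneg_left hq.le (norm_nonneg b)]
  have hA : ‖qPoch q (q ^ 2) n‖ ≤ Ecst q := norm_qPoch_le (hq2 hq) hq.le n
  have hB : ‖qPoch (b * q) (q ^ 2) n‖ ≤ Ecst q :=
    norm_qPoch_le (hq2 hq) (le_trans hbq hρ.le) n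
  have hD : Dcst q ρ ≤ ‖qPoch (-(b * q)) q (2 * n + 1)‖ := norm_qPoch_ge hq hρ hb _
  have hDpos : 0 < Dcst q ρ := Real.exp_pos _
  have hE0 : 0 < Ecst q := Real.exp_pos _
  have hnum : ‖qPoch q (q ^ 2) n * qPoch (b * q) (q ^ 2) n * (b * q) ^ n‖
      ≤ Ecst q * Ecst q * ρ ^ n := by
    rw [norm_mul, norm_mul, norm_pow]
    have h1 : ‖b * q‖ ^ n ≤ ρ ^ n := pow_le_pow_left₀ (norm_nonneg _) hbq n
    have h2 : 0 ≤ ρ ^ n := pow_nonneg hρ0 n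
    have h3 : 0 ≤ ‖b * q‖ ^ n := pow_nonneg (norm_nonneg _) n
    nlinarith [norm_nonneg (qPoch q (q ^ 2) n), norm_nonneg (qPoch (b * q) (q ^ 2) n),
      mul_le_mul hA hB (norm_nonneg _) hE0.le]
  calc ‖Tt q b n‖ = ‖qPoch q (q ^ 2) n * qPoch (b * q) (q ^ 2) n * (b * q) ^ n‖ /
        ‖qPoch (-(b * q)) q (2 * n + 1)‖ := by rw [Tt, norm_div]
    _ ≤ Ecst q * Ecst q * ρ ^ n / Dcst q ρ :=
        div_le_div₀ (mul_nonneg (mul_nonneg hE0.le hE0.le) (pow_nonneg hρ0 n)) hnum hDpos hD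
    _ = Ecst q ^ 2 / Dcst q ρ * ρ ^ n := by ring

lemma norm_Gg_le {q b : ℂ} {ρ : ℝ} (hq : ‖q‖ < 1) (hρ : ρ < 1) (hb : ‖b‖ ≤ ρ) (n : ℕ) :
    ‖Gg q b n‖ ≤ 2 * Ecst q ^ 2 / ((1 - ρ) * Dcst q ρ) * ρ ^ n := by
  have hρ0 : 0 ≤ ρ := le_trans (norm_nonneg b) hb
  have ht0 : 0 ≤ ‖q‖ := norm_nonneg q
  have hbq : ‖b * q‖ ≤ ρ := by
    rw [norm_mul]
    nlinarith [norm_nonneg b, mul_le_mul_of_nonneg_left hq.le (norm_nonneg b)]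
  have hA : ‖qPoch q (q ^ 2) n‖ ≤ Ecst q := norm_qPoch_le (hq2 hq) hq.le n
  have hB : ‖qPoch (b * q) (q ^ 2) n‖ ≤ Ecst q :=
    norm_qPoch_le (hq2 hq) (le_trans hbq hρ.le) n
  have hD : Dcst q ρ ≤ ‖qPoch (-(b * q)) q (2 * n + 1)‖ := norm_qPoch_ge hq hρ hb _
  have hDpos : 0 < Dcst q ρ := Real.exp_pos _
  have hE0 : 0 < Ecst q := Real.exp_pos _
  have hfac : ‖(1 : ℂ) - b ^ 2 * q ^ (2 * n + 2)‖ ≤ 2 := by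
    calc ‖(1 : ℂ) - b ^ 2 * q ^ (2 * n + 2)‖ ≤ ‖(1 : ℂ)‖ + ‖b ^ 2 * q ^ (2 * n + 2)‖ :=
          norm_sub_le _ _
      _ ≤ 2 := by
        rw [norm_one, norm_mul, norm_pow, norm_pow]
        have h1 : ‖b‖ ^ 2 ≤ 1 := pow_le_one₀ (norm_nonneg b) (le_trans hb hρ.le)
        have h2 : ‖q‖ ^ (2 * n + 2) ≤ 1 := pow_le_one₀ ht0 hq.le
        nlinarith [pow_nonneg (norm_nonneg b) 2, pow_nonneg ht0 (2 * n + 2)]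
  have hnum : ‖(b * q) ^ n * qPoch q (q ^ 2) n * qPoch (b * q) (q ^ 2) n *
      ((1 : ℂ) - b ^ 2 * q ^ (2 * n + 2))‖ ≤ ρ ^ n * (Ecst q * Ecst q * 2) := by
    rw [norm_mul, norm_mul, norm_mul, norm_pow]
    have h1 : ‖b * q‖ ^ n ≤ ρ ^ n := pow_le_pow_left₀ (norm_nonneg _) hbq n
    have h3 : 0 ≤ ‖b * q‖ ^ n := pow_nonneg (norm_nonneg _) n
    have h4 : ‖qPoch q (q ^ 2) n‖ * ‖qPoch (b * q) (q ^ 2) n‖ ≤ Ecst q * Ecst q :=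
      mul_le_mul hA hB (norm_nonneg _) hE0.le
    nlinarith [norm_nonneg (qPoch q (q ^ 2) n), norm_nonneg (qPoch (b * q) (q ^ 2) n),
      norm_nonneg ((1 : ℂ) - b ^ 2 * q ^ (2 * n + 2)), pow_nonneg hρ0 n,
      mul_le_mul h4 hfac (norm_nonneg _) (by positivity : (0:ℝ) ≤ Ecst q * Ecst q)]
  have hden : (1 - ρ) * Dcst q ρ ≤ ‖((1 : ℂ) - b * q) * qPoch (-(b * q)) q (2 * n + 1)‖ := by
    rw [norm_mul]
    have h1 : 1 - ρ ≤ ‖(1 : ℂ) - b * q‖ := by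
      have := norm_sub_norm_le (1 : ℂ) (b * q)
      simp only [norm_one] at this
      linarith
    exact mul_le_mul h1 hD hDpos.le (le_trans (by linarith) h1)
  calc ‖Gg q b n‖ = ‖(b * q) ^ n * qPoch q (q ^ 2) n * qPoch (b * q) (q ^ 2) n *
        ((1 : ℂ) - b ^ 2 * q ^ (2 * n + 2))‖ /
        ‖((1 : ℂ) - b * q) * qPoch (-(b * q)) q (2 * n + 1)‖ := by rw [Gg, norm_div]
    _ ≤ ρ ^ n * (Ecst q * Ecst q * 2) / ((1 - ρ) * Dcst q ρ) :=
        div_le_div₀ (mul_nonneg (pow_nonneg hρ0 n)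
          (by nlinarith : (0:ℝ) ≤ Ecst q * Ecst q * 2)) hnum
          (mul_pos (by linarith) hDpos) hden
    _ = 2 * Ecst q ^ 2 / ((1 - ρ) * Dcst q ρ) * ρ ^ n := by ring

noncomputable def Ff (q b : ℂ) : ℂ := ∑' n : ℕ, Tt q b n

noncomputable def Pg (q b : ℂ) : ℂ := ∑' n : ℕ, (-1 : ℂ) ^ n * b ^ n * q ^ (n * (n + 1))

lemma summable_Tt {q b : ℂ} (hq : ‖q‖ < 1) (hb : ‖b‖ < 1) : Summable (Tt q b) := by
  refine Summable.of_norm_bounded (g := fun n => Ecst q ^ 2 / Dcst q ‖b‖ * ‖b‖ ^ n) ?_ ?_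
  · exact (summable_geometric_of_lt_one (norm_nonneg b) hb).mul_left _
  · exact fun n => norm_Tt_le hq hb le_rfl n

lemma norm_Pg_term_le {q b : ℂ} (hq : ‖q‖ < 1) (hb : ‖b‖ ≤ 1) (n : ℕ) :
    ‖(-1 : ℂ) ^ n * b ^ n * q ^ (n * (n + 1))‖ ≤ ‖q‖ ^ n := by
  rw [norm_mul, norm_mul, norm_pow, norm_pow, norm_pow, norm_neg, norm_one, one_pow, one_mul]
  have h1 : ‖b‖ ^ n ≤ 1 := pow_le_one₀ (norm_nonneg b) hb
  have h2 : ‖q‖ ^ (n * (n + 1)) ≤ ‖q‖ ^ n :=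
    pow_le_pow_of_le_one (norm_nonneg q) hq.le (by nlinarith)
  nlinarith [pow_nonneg (norm_nonneg q) (n * (n + 1)), pow_nonneg (norm_nonneg b) n,
    pow_nonneg (norm_nonneg q) n]

lemma summable_Pg {q b : ℂ} (hq : ‖q‖ < 1) (hb : ‖b‖ ≤ 1) :
    Summable (fun n : ℕ => (-1 : ℂ) ^ n * b ^ n * q ^ (n * (n + 1))) :=
  Summable.of_norm_bounded (summable_geometric_of_lt_one (norm_nonneg q) hq)
    (norm_Pg_term_le hq hb)

lemma norm_Pg_le {q b : ℂ} (hq : ‖q‖ < 1) (hb : ‖b‖ ≤ 1) :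
    ‖Pg q b‖ ≤ (1 - ‖q‖)⁻¹ := by
  have hs : Summable fun n : ℕ => ‖(-1 : ℂ) ^ n * b ^ n * q ^ (n * (n + 1))‖ :=
    Summable.of_nonneg_of_le (fun n => norm_nonneg _) (norm_Pg_term_le hq hb)
      (summable_geometric_of_lt_one (norm_nonneg q) hq)
  calc ‖Pg q b‖ ≤ ∑' n : ℕ, ‖(-1 : ℂ) ^ n * b ^ n * q ^ (n * (n + 1))‖ :=
        norm_tsum_le_tsum_norm hs
    _ ≤ ∑' n : ℕ, ‖q‖ ^ n :=
        Summable.tsum_le_tsum (norm_Pg_term_le hq hb) hs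
          (summable_geometric_of_lt_one (norm_nonneg q) hq)
    _ = (1 - ‖q‖)⁻¹ := tsum_geometric_of_lt_one (norm_nonneg q) hq

lemma norm_Ff_le {q b : ℂ} {ρ : ℝ} (hq : ‖q‖ < 1) (hρ : ρ < 1) (hb : ‖b‖ ≤ ρ) :
    ‖Ff q b‖ ≤ Ecst q ^ 2 / Dcst q ρ * (1 - ρ)⁻¹ := by
  have hρ0 : 0 ≤ ρ := le_trans (norm_nonneg b) hb
  have hgeo : Summable fun n : ℕ => Ecst q ^ 2 / Dcst q ρ * ρ ^ n :=
    (summable_geometric_of_lt_one hρ0 hρ).mul_left _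
  have hs : Summable fun n : ℕ => ‖Tt q b n‖ :=
    Summable.of_nonneg_of_le (fun n => norm_nonneg _) (fun n => norm_Tt_le hq hρ hb n) hgeo
  calc ‖Ff q b‖ ≤ ∑' n : ℕ, ‖Tt q b n‖ := norm_tsum_le_tsum_norm hs
    _ ≤ ∑' n : ℕ, Ecst q ^ 2 / Dcst q ρ * ρ ^ n :=
        Summable.tsum_le_tsum (fun n => norm_Tt_le hq hρ hb n) hs hgeo
    _ = Ecst q ^ 2 / Dcst q ρ * (1 - ρ)⁻¹ := by
        rw [tsum_mul_left, tsum_geometric_of_lt_one hρ0 hρ]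

lemma Pg_fe {q b : ℂ} (hq : ‖q‖ < 1) (hb : ‖b‖ < 1) :
    Pg q b = 1 - b * q ^ 2 * Pg q (b * q ^ 2) := by
  have hs : Summable (fun n : ℕ => (-1 : ℂ) ^ n * b ^ n * q ^ (n * (n + 1))) :=
    summable_Pg hq hb.le
  rw [Pg, Summable.tsum_eq_zero_add hs]
  have h0 : (-1 : ℂ) ^ 0 * b ^ 0 * q ^ (0 * (0 + 1)) = 1 := by norm_num
  rw [h0]
  have hterm : ∀ n : ℕ, (-1 : ℂ) ^ (n + 1) * b ^ (n + 1) * q ^ ((n + 1) * (n + 1 + 1))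
      = -(b * q ^ 2) * ((-1 : ℂ) ^ n * (b * q ^ 2) ^ n * q ^ (n * (n + 1))) := by
    intro n
    have e : (n + 1) * (n + 1 + 1) = n * (n + 1) + (2 * n + 2) := by ring
    rw [e, pow_add]
    ring
  rw [tsum_congr hterm, tsum_mul_left]
  rw [Pg]
  ring

lemma Ff_fe {q b : ℂ} (hq : ‖q‖ < 1) (hb : ‖b‖ < 1) :
    Ff q b = 1 - b * q ^ 2 * Ff q (b * q ^ 2) := by
  have hb2 : ‖b * q ^ 2‖ < 1 := norm_mul_pow_lt hb hq 2
  have h1 : Summable (Tt q b) := summable_Tt hq hb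
  have h2 : Summable (Tt q (b * q ^ 2)) := summable_Tt hq hb2
  have hsum : HasSum (fun n => Tt q b n + b * q ^ 2 * Tt q (b * q ^ 2) n)
      (Ff q b + b * q ^ 2 * Ff q (b * q ^ 2)) :=
    h1.hasSum.add (h2.hasSum.mul_left (b * q ^ 2))
  have htends := hsum.tendsto_sum_nat
  have heq : (fun N => ∑ n ∈ Finset.range N, (Tt q b n + b * q ^ 2 * Tt q (b * q ^ 2) n))
      = fun N => 1 - Gg q b N := funext fun N => partial_sum hq hb N
  rw [heq] at htends
  have hGg : Filter.Tendsto (fun N => Gg q b N) Filter.atTop (nhds 0) := by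
    apply squeeze_zero_norm (fun N => norm_Gg_le hq hb le_rfl N)
    have := (tendsto_pow_atTop_nhds_zero_of_lt_one (norm_nonneg b) hb).const_mul
      (2 * Ecst q ^ 2 / ((1 - ‖b‖) * Dcst q ‖b‖))
    simpa using this
  have hlim : Filter.Tendsto (fun N => 1 - Gg q b N) Filter.atTop (nhds 1) := by
    have h3 : Filter.Tendsto (fun _ : ℕ => (1 : ℂ)) Filter.atTop (nhds 1) := tendsto_const_nhds
    have := h3.sub hGg
    simpa using this
  have := tendsto_nhds_unique htends hlim
  linear_combination this

lemma main {q a : ℂ} (hq : ‖q‖ < 1) (ha : ‖a‖ < 1) : Ff q a = Pg q a := by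
  set M := Ecst q ^ 2 / Dcst q ‖a‖ * (1 - ‖a‖)⁻¹ + (1 - ‖q‖)⁻¹ with hMdef
  have key : ∀ b : ℂ, ‖b‖ ≤ ‖a‖ →
      Ff q b - Pg q b = -(b * q ^ 2) * (Ff q (b * q ^ 2) - Pg q (b * q ^ 2)) := by
    intro b hble
    have hb1 : ‖b‖ < 1 := lt_of_le_of_lt hble ha
    rw [Ff_fe hq hb1, Pg_fe hq hb1]
    ring
  have hM : ∀ b : ℂ, ‖b‖ ≤ ‖a‖ → ‖Ff q b - Pg q b‖ ≤ M := by
    intro b hble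
    have h1 := norm_Ff_le hq ha hble
    have h2 := norm_Pg_le hq (le_trans hble ha.le)
    calc ‖Ff q b - Pg q b‖ ≤ ‖Ff q b‖ + ‖Pg q b‖ := norm_sub_le _ _
      _ ≤ M := add_le_add h1 h2
  have hM0 : 0 ≤ M := le_trans (norm_nonneg _) (hM a le_rfl)
  have hs1 : 0 ≤ ‖a‖ * ‖q‖ ^ 2 := by positivity
  have hs2 : ‖a‖ * ‖q‖ ^ 2 < 1 := by
    have h1 : ‖q‖ ^ 2 ≤ 1 := pow_le_one₀ (norm_nonneg q) hq.le
    nlinarith [norm_nonneg a, pow_nonneg (norm_nonneg q) 2]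
  have iter : ∀ N : ℕ, ∀ b : ℂ, ‖b‖ ≤ ‖a‖ →
      ‖Ff q b - Pg q b‖ ≤ (‖a‖ * ‖q‖ ^ 2) ^ N * M := by
    intro N
    induction N with
    | zero => intro b hb; simpa using hM b hb
    | succ N ih =>
      intro b hb
      have hb2 : ‖b * q ^ 2‖ ≤ ‖a‖ * ‖q‖ ^ 2 := by
        rw [norm_mul, norm_pow]
        exact mul_le_mul_of_nonneg_right hb (by positivity)
      have hb2' : ‖b * q ^ 2‖ ≤ ‖a‖ := by
        have h1 : ‖q‖ ^ 2 ≤ 1 := pow_le_one₀ (norm_nonneg q) hq.le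
        have := mul_le_mul_of_nonneg_left h1 (le_trans (norm_nonneg b) hb)
        calc ‖b * q ^ 2‖ ≤ ‖a‖ * ‖q‖ ^ 2 := hb2
          _ ≤ ‖a‖ * 1 := this
          _ = ‖a‖ := mul_one _
      rw [key b hb, norm_mul, norm_neg]
      calc ‖b * q ^ 2‖ * ‖Ff q (b * q ^ 2) - Pg q (b * q ^ 2)‖
          ≤ (‖a‖ * ‖q‖ ^ 2) * ((‖a‖ * ‖q‖ ^ 2) ^ N * M) := by
            refine mul_le_mul hb2 (ih (b * q ^ 2) hb2') (norm_nonneg _) hs1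
        _ = (‖a‖ * ‖q‖ ^ 2) ^ (N + 1) * M := by ring
  have htend : Filter.Tendsto (fun N : ℕ => (‖a‖ * ‖q‖ ^ 2) ^ N * M)
      Filter.atTop (nhds 0) := by
    have := (tendsto_pow_atTop_nhds_zero_of_lt_one hs1 hs2).mul_const M
    simpa using this
  have hle : ‖Ff q a - Pg q a‖ ≤ 0 := ge_of_tendsto' htend (fun N => iter N a le_rfl)
  have h0 : Ff q a - Pg q a = 0 :=
    norm_eq_zero.mp (le_antisymm hle (norm_nonneg _))
  linear_combination h0

end Stmt15


/-- Lost notebook identity obtained by a quadratic Heine transformation. -/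
theorem stmt_15 (q a : ℂ) (hq : ‖q‖ < 1) (ha : ‖a‖ < 1) :
    ∑' n : ℕ, qPoch q (q ^ 2) n * qPoch (a * q) (q ^ 2) n * (a * q) ^ n /
        qPoch (-(a * q)) q (2 * n + 1)
      = ∑' n : ℕ, (-1 : ℂ) ^ n * a ^ n * q ^ (n * (n + 1)) :=
  Stmt15.main hq ha
end

section
/- False theta identity: Σ_{n≥0} (-1)^n q^{n(n+1)} / (-q^2;q^2)_{n+1} = 1 + 2 Σ_{n≥1} q^{3n^2}(q^n − q^{-n}), for |q|<1. -/
open scoped BigOperators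

namespace Fth

noncomputable def P (q : ℂ) (n : ℕ) : ℂ := ∏ j ∈ Finset.range n, (1 + q ^ (2*j+2))
noncomputable def Poch2 (q t : ℂ) (n : ℕ) : ℂ := ∏ j ∈ Finset.range n, (1 + t * q ^ (2*j))
noncomputable def f (q t : ℂ) (m : ℕ) : ℂ := (-1)^m * q^(m*(m-1)) * t^m / P q m
noncomputable def L (q t : ℂ) : ℂ := ∑' m, f q t m
noncomputable def u (q t : ℂ) (n : ℕ) : ℂ :=
  Poch2 q t n * t^n * q^(n*(3*n-1)) * (1 - t * q^(4*n)) / P q n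
noncomputable def R (q t : ℂ) : ℂ := ∑' n, u q t n
noncomputable def a (q t : ℂ) (n : ℕ) : ℂ :=
  Poch2 q t n * t^n * q^(n*(3*n-1)) * (1 + q^(2*n)) / P q n

lemma hc {q : ℂ} (hq : ‖q‖ < 1) : 0 < 1 - ‖q‖^2 := by
  have := pow_lt_one₀ (norm_nonneg q) hq (two_ne_zero)
  linarith

lemma norm_one_add_ge {q : ℂ} (hq : ‖q‖ < 1) (z : ℂ) (hz : ‖z‖ ≤ ‖q‖^2) :
    1 - ‖q‖^2 ≤ ‖1 + z‖ := by
  have h := norm_sub_norm_le (1:ℂ) (-z)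
  simp only [sub_neg_eq_add, norm_neg, norm_one] at h
  linarith

lemma normq_pow_le {q : ℂ} (hq : ‖q‖ < 1) (k : ℕ) : ‖q^(2*k+2)‖ ≤ ‖q‖^2 := by
  rw [norm_pow]
  calc ‖q‖^(2*k+2) = ‖q‖^(2*k) * ‖q‖^2 := by rw [← pow_add]
  _ ≤ 1 * ‖q‖^2 := by
      apply mul_le_mul_of_nonneg_right _ (by positivity)
      exact pow_le_one₀ (norm_nonneg q) hq.le
  _ = ‖q‖^2 := one_mul _

lemma P_succ (q : ℂ) (n : ℕ) : P q (n+1) = P q n * (1 + q^(2*n+2)) :=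
  Finset.prod_range_succ _ n

lemma P_norm_ge {q : ℂ} (hq : ‖q‖ < 1) (n : ℕ) : (1-‖q‖^2)^n ≤ ‖P q n‖ := by
  induction n with
  | zero => simp [P]
  | succ k ih =>
    rw [P_succ, norm_mul, pow_succ]
    exact mul_le_mul ih (norm_one_add_ge hq _ (normq_pow_le hq k))
      (hc hq).le (norm_nonneg _)

lemma P_ne {q : ℂ} (hq : ‖q‖ < 1) (n : ℕ) : P q n ≠ 0 := by
  intro h
  have := P_norm_ge hq n
  rw [h, norm_zero] at this
  have : (0:ℝ) < (1-‖q‖^2)^n := pow_pos (hc hq) n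
  linarith

lemma one_add_pow_ne {q : ℂ} (hq : ‖q‖ < 1) (k : ℕ) : (1 + q^(2*k+2)) ≠ 0 := by
  intro h
  have := norm_one_add_ge hq _ (normq_pow_le hq k)
  rw [h, norm_zero] at this
  linarith [hc hq]

end Fth

namespace Part2
open Filter Topology Fth

lemma exp_lem1 (m : ℕ) : (m+1)*((m+1)-1) = m*(m-1) + 2*m := by
  cases m with
  | zero => rfl
  | succ k => simp only [Nat.add_sub_cancel]; ring

lemma exp_lem2 (n : ℕ) : (n+1)*(3*(n+1)-1) = n*(3*n-1) + (6*n+2) := by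
  cases n with
  | zero => rfl
  | succ k =>
    rw [show 3*(k+1+1)-1 = 3*k+5 from by omega, show 3*(k+1)-1 = 3*k+2 from by omega]
    ring

lemma qsq_lt_one {q : ℂ} (hq : ‖q‖ < 1) : ‖q‖^2 < 1 :=
  pow_lt_one₀ (norm_nonneg q) hq two_ne_zero

lemma f_succ {q : ℂ} (hq : ‖q‖ < 1) (t : ℂ) (m : ℕ) :
    f q t (m+1) = f q t m * (-(t * q^(2*m)) / (1 + q^(2*m+2))) := by
  have he : q^((m+1)*((m+1)-1)) = q^(m*(m-1)) * q^(2*m) := by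
    rw [← pow_add, exp_lem1]
  simp only [f, P_succ, he, pow_succ]
  have h1 := P_ne hq m
  have h2 := one_add_pow_ne hq m
  field_simp

lemma summable_aux {g ρ : ℕ → ℝ} (hg : ∀ n, g (n+1) = g n * ρ n)
    (hge : ∀ n, 0 ≤ g n) (hρ0 : ∀ n, 0 ≤ ρ n)
    (hρ : Tendsto ρ atTop (𝓝 0)) : Summable g := by
  apply summable_of_ratio_norm_eventually_le (r := 1/2) (by norm_num)
  filter_upwards [hρ.eventually (gt_mem_nhds (by norm_num : (0:ℝ) < 1/2))] with n hn
  rw [Real.norm_of_nonneg (hge (n+1)), Real.norm_of_nonneg (hge n), hg n]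
  calc g n * ρ n ≤ g n * (1/2) := mul_le_mul_of_nonneg_left hn.le (hge n)
  _ = 1/2 * g n := by ring

lemma tendsto_pow_mul_zero {r : ℝ} (hr0 : 0 ≤ r) (hr : r < 1) (C : ℝ) :
    Tendsto (fun n : ℕ => C * r ^ n) atTop (𝓝 0) := by
  have := (tendsto_pow_atTop_nhds_zero_of_lt_one hr0 hr).const_mul C
  simpa using this

lemma summable_f {q : ℂ} (hq : ‖q‖ < 1) (t : ℂ) : Summable (f q t) := by
  apply summable_of_ratio_norm_eventually_le (r := 1/2) (by norm_num)
  have hc' := hc hq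
  have htend : Tendsto (fun m : ℕ => ‖t‖ * (1-‖q‖^2)⁻¹ * (‖q‖^2) ^ m) atTop (𝓝 0) :=
    tendsto_pow_mul_zero (by positivity) (qsq_lt_one hq) _
  filter_upwards [htend.eventually (gt_mem_nhds (by norm_num : (0:ℝ) < 1/2))] with m hm
  rw [f_succ hq t m, norm_mul]
  have hb : ‖-(t * q^(2*m)) / (1 + q^(2*m+2))‖ ≤ ‖t‖ * (1-‖q‖^2)⁻¹ * (‖q‖^2)^m := by
    rw [norm_div, norm_neg, norm_mul, norm_pow]
    have h1 : (1-‖q‖^2) ≤ ‖1 + q^(2*m+2)‖ := norm_one_add_ge hq _ (normq_pow_le hq m)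
    have h2 : ‖t‖ * ‖q‖^(2*m) / ‖1 + q^(2*m+2)‖ ≤ ‖t‖ * ‖q‖^(2*m) / (1-‖q‖^2) :=
      div_le_div_of_nonneg_left (by positivity) hc' h1
    calc ‖t‖ * ‖q‖^(2*m) / ‖1 + q^(2*m+2)‖ ≤ ‖t‖ * ‖q‖^(2*m) / (1-‖q‖^2) := h2
    _ = ‖t‖ * (1-‖q‖^2)⁻¹ * (‖q‖^2)^m := by rw [← pow_mul]; ring
  calc ‖f q t m‖ * ‖-(t * q^(2*m)) / (1 + q^(2*m+2))‖
      ≤ ‖f q t m‖ * (‖t‖ * (1-‖q‖^2)⁻¹ * (‖q‖^2)^m) :=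
        mul_le_mul_of_nonneg_left hb (norm_nonneg _)
  _ ≤ ‖f q t m‖ * (1/2) := mul_le_mul_of_nonneg_left hm.le (norm_nonneg _)
  _ = 1/2 * ‖f q t m‖ := by ring

noncomputable def U (q t : ℂ) (n : ℕ) : ℝ :=
  (1+‖t‖)^(n+1) * ‖t‖^n * ‖q‖^(n*(3*n-1)) * ((1-‖q‖^2)⁻¹)^n

noncomputable def A (q t : ℂ) (n : ℕ) : ℝ :=
  2 * (1+‖t‖)^n * ‖t‖^n * ‖q‖^(n*(3*n-1)) * ((1-‖q‖^2)⁻¹)^n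

lemma norm_Poch2_le {q : ℂ} (hq : ‖q‖ < 1) (t : ℂ) (n : ℕ) :
    ‖Poch2 q t n‖ ≤ (1+‖t‖)^n := by
  rw [Poch2, norm_prod]
  refine le_trans (Finset.prod_le_prod (fun j _ => norm_nonneg _) (fun j (_: j ∈ Finset.range n) => ?_))
    (le_of_eq (by rw [Finset.prod_const, Finset.card_range]))
  calc ‖1 + t * q^(2*j)‖ ≤ ‖(1:ℂ)‖ + ‖t * q^(2*j)‖ := norm_add_le _ _
  _ = 1 + ‖t‖ * ‖q‖^(2*j) := by rw [norm_one, norm_mul, norm_pow]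
  _ ≤ 1 + ‖t‖ * 1 := by
      have : ‖q‖^(2*j) ≤ 1 := pow_le_one₀ (norm_nonneg q) hq.le
      nlinarith [norm_nonneg t]
  _ = 1 + ‖t‖ := by ring

lemma norm_div_P_le {q : ℂ} (hq : ‖q‖ < 1) (x : ℂ) (n : ℕ) :
    ‖x / P q n‖ ≤ ‖x‖ * ((1-‖q‖^2)⁻¹)^n := by
  rw [norm_div]
  have h1 : (1-‖q‖^2)^n ≤ ‖P q n‖ := P_norm_ge hq n
  have h2 : (0:ℝ) < (1-‖q‖^2)^n := pow_pos (hc hq) n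
  calc ‖x‖ / ‖P q n‖ ≤ ‖x‖ / (1-‖q‖^2)^n :=
        div_le_div_of_nonneg_left (norm_nonneg x) h2 h1
  _ = ‖x‖ * ((1-‖q‖^2)⁻¹)^n := by rw [inv_pow, div_eq_mul_inv]

lemma norm_u_le {q : ℂ} (hq : ‖q‖ < 1) (t : ℂ) (n : ℕ) : ‖u q t n‖ ≤ U q t n := by
  have h := norm_div_P_le hq (Poch2 q t n * t^n * q^(n*(3*n-1)) * (1 - t * q^(4*n))) n
  refine le_trans h ?_
  rw [U]
  have h1 : ‖Poch2 q t n * t^n * q^(n*(3*n-1)) * (1 - t * q^(4*n))‖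
      ≤ (1+‖t‖)^(n+1) * ‖t‖^n * ‖q‖^(n*(3*n-1)) := by
    rw [norm_mul, norm_mul, norm_mul, norm_pow, norm_pow]
    have h2 : ‖1 - t * q^(4*n)‖ ≤ 1 + ‖t‖ := by
      calc ‖1 - t * q^(4*n)‖ ≤ ‖(1:ℂ)‖ + ‖t * q^(4*n)‖ := norm_sub_le _ _
      _ = 1 + ‖t‖ * ‖q‖^(4*n) := by rw [norm_one, norm_mul, norm_pow]
      _ ≤ 1 + ‖t‖ := by
          have : ‖q‖^(4*n) ≤ 1 := pow_le_one₀ (norm_nonneg q) hq.le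
          nlinarith [norm_nonneg t]
    have h3 := norm_Poch2_le hq t n
    calc ‖Poch2 q t n‖ * ‖t‖^n * ‖q‖^(n*(3*n-1)) * ‖1 - t * q^(4*n)‖
        ≤ (1+‖t‖)^n * ‖t‖^n * ‖q‖^(n*(3*n-1)) * (1 + ‖t‖) := by
          apply mul_le_mul _ h2 (norm_nonneg _) (by positivity)
          apply mul_le_mul_of_nonneg_right _ (by positivity)
          exact mul_le_mul_of_nonneg_right h3 (by positivity)
    _ = (1+‖t‖)^(n+1) * ‖t‖^n * ‖q‖^(n*(3*n-1)) := by ring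
  have hcc := hc hq
  exact mul_le_mul_of_nonneg_right h1 (by positivity)

lemma summable_U {q : ℂ} (hq : ‖q‖ < 1) (t : ℂ) : Summable (U q t) := by
  apply summable_aux (ρ := fun n => (1+‖t‖) * ‖t‖ * ((1-‖q‖^2)⁻¹ * ‖q‖^2) * (‖q‖^6)^n)
  · intro n
    rw [U, U, exp_lem2, pow_succ, pow_succ]
    have h6 : (‖q‖^6)^n = ‖q‖^(6*n) := by rw [← pow_mul, mul_comm]
    rw [h6, show n*(3*n-1)+(6*n+2) = (n*(3*n-1)+6*n)+2 from by ring, pow_add, pow_add]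
    ring
  · intro n
    have := hc hq
    rw [U]; positivity
  · intro n
    have := hc hq
    positivity
  · have h6 : ‖q‖^6 < 1 := pow_lt_one₀ (norm_nonneg q) hq (by norm_num)
    exact tendsto_pow_mul_zero (r := ‖q‖^6) (by positivity) h6 _

lemma summable_u {q : ℂ} (hq : ‖q‖ < 1) (t : ℂ) : Summable (u q t) :=
  Summable.of_norm_bounded (summable_U hq t) (norm_u_le hq t)

lemma norm_a_le {q : ℂ} (hq : ‖q‖ < 1) (t : ℂ) (n : ℕ) : ‖a q t n‖ ≤ A q t n := by
  have h := norm_div_P_le hq (Poch2 q t n * t^n * q^(n*(3*n-1)) * (1 + q^(2*n))) n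
  refine le_trans h ?_
  rw [A]
  have h1 : ‖Poch2 q t n * t^n * q^(n*(3*n-1)) * (1 + q^(2*n))‖
      ≤ 2 * (1+‖t‖)^n * ‖t‖^n * ‖q‖^(n*(3*n-1)) := by
    rw [norm_mul, norm_mul, norm_mul, norm_pow, norm_pow]
    have h2 : ‖1 + q^(2*n)‖ ≤ 2 := by
      calc ‖1 + q^(2*n)‖ ≤ ‖(1:ℂ)‖ + ‖q^(2*n)‖ := norm_add_le _ _
      _ = 1 + ‖q‖^(2*n) := by rw [norm_one, norm_pow]
      _ ≤ 2 := by
          have : ‖q‖^(2*n) ≤ 1 := pow_le_one₀ (norm_nonneg q) hq.le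
          linarith
    have h3 := norm_Poch2_le hq t n
    calc ‖Poch2 q t n‖ * ‖t‖^n * ‖q‖^(n*(3*n-1)) * ‖1 + q^(2*n)‖
        ≤ (1+‖t‖)^n * ‖t‖^n * ‖q‖^(n*(3*n-1)) * 2 := by
          apply mul_le_mul _ h2 (norm_nonneg _) (by positivity)
          apply mul_le_mul_of_nonneg_right _ (by positivity)
          exact mul_le_mul_of_nonneg_right h3 (by positivity)
    _ = 2 * (1+‖t‖)^n * ‖t‖^n * ‖q‖^(n*(3*n-1)) := by ring
  have hcc := hc hq
  exact mul_le_mul_of_nonneg_right h1 (by positivity)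

lemma summable_A {q : ℂ} (hq : ‖q‖ < 1) (t : ℂ) : Summable (A q t) := by
  apply summable_aux (ρ := fun n => (1+‖t‖) * ‖t‖ * ((1-‖q‖^2)⁻¹ * ‖q‖^2) * (‖q‖^6)^n)
  · intro n
    rw [A, A, exp_lem2, pow_succ, pow_succ]
    have h6 : (‖q‖^6)^n = ‖q‖^(6*n) := by rw [← pow_mul, mul_comm]
    rw [h6, show n*(3*n-1)+(6*n+2) = (n*(3*n-1)+6*n)+2 from by ring, pow_add, pow_add]
    ring
  · intro n
    have := hc hq
    rw [A]; positivity
  · intro n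
    have := hc hq
    positivity
  · have h6 : ‖q‖^6 < 1 := pow_lt_one₀ (norm_nonneg q) hq (by norm_num)
    exact tendsto_pow_mul_zero (r := ‖q‖^6) (by positivity) h6 _

lemma a_tendsto_zero {q : ℂ} (hq : ‖q‖ < 1) (t : ℂ) :
    Tendsto (a q t) atTop (𝓝 0) :=
  squeeze_zero_norm (norm_a_le hq t) (summable_A hq t).tendsto_atTop_zero

end Part2


namespace Part3
open Filter Topology Fth Part2

lemma f_zero (q t : ℂ) : f q t 0 = 1 := by simp [f, P]

lemma f_step {q : ℂ} (hq : ‖q‖ < 1) (t : ℂ) (k : ℕ) :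
    f q t (k+1) = -t * f q (t*q^2) k - f q (t*q^2) (k+1) := by
  have e1 : q^((k+1)*((k+1)-1)) = q^(k*(k-1)) * q^(2*k) := by rw [← pow_add, exp_lem1]
  have h1 := P_ne hq k
  have h2 := one_add_pow_ne hq k
  simp only [f, P_succ, e1]
  field_simp
  ring

lemma L_fe {q : ℂ} (hq : ‖q‖ < 1) (t : ℂ) : L q t = 2 - (1+t) * L q (t*q^2) := by
  have hs := summable_f hq t
  have hg := summable_f hq (t*q^2)
  have hg' : Summable (fun k => f q (t*q^2) (k+1)) := (summable_nat_add_iff 1).2 hg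
  have h0 : L q t = f q t 0 + ∑' k, f q t (k+1) := Summable.tsum_eq_zero_add hs
  have h1 : ∑' k, f q t (k+1) = ∑' k, (-t * f q (t*q^2) k - f q (t*q^2) (k+1)) :=
    tsum_congr (f_step hq t)
  have h2 : ∑' k, (-t * f q (t*q^2) k - f q (t*q^2) (k+1))
      = (∑' k, -t * f q (t*q^2) k) - ∑' k, f q (t*q^2) (k+1) :=
    Summable.tsum_sub (hg.mul_left (-t)) hg'
  have h3 : (∑' k, -t * f q (t*q^2) k) = -t * L q (t*q^2) := tsum_mul_left
  have h4 : L q (t*q^2) = f q (t*q^2) 0 + ∑' k, f q (t*q^2) (k+1) := Summable.tsum_eq_zero_add hg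
  rw [h0, h1, h2, h3, f_zero]
  rw [f_zero] at h4
  have : ∑' k, f q (t*q^2) (k+1) = L q (t*q^2) - 1 := by rw [h4]; ring
  rw [this]
  ring

lemma Poch2_succ (q t : ℂ) (n : ℕ) :
    Poch2 q t (n+1) = Poch2 q t n * (1 + t * q^(2*n)) := Finset.prod_range_succ _ n

lemma Poch2_shift {q t : ℂ} (n : ℕ) :
    (1+t) * Poch2 q (t*q^2) n = Poch2 q t n * (1 + t * q^(2*n)) := by
  have h : ∀ j ∈ Finset.range n, (1 + (t*q^2) * q^(2*j)) = (1 + t*q^(2*(j+1))) :=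
    fun j _ => by rw [show 2*(j+1) = 2*j+2 from by ring, pow_add]; ring
  rw [Poch2, Finset.prod_congr rfl h, ← Poch2_succ, Poch2, Finset.prod_range_succ']
  norm_num [mul_comm]

lemma key_step {q : ℂ} (hq : ‖q‖ < 1) (t : ℂ) (n : ℕ) :
    u q t n + (1+t) * u q (t*q^2) n = a q t n - a q t (n+1) := by
  have hPn := P_ne hq n
  have hne2 : (1 + q^(2*n+2)) ≠ 0 := one_add_pow_ne hq n
  have e2n2 : q^(2*n+2) = q^(2*n)*q^2 := pow_add q (2*n) 2
  have hne2' : (1 + q^(2*n)*q^2) ≠ 0 := by rw [← e2n2]; exact hne2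
  have hw := Poch2_shift (q := q) (t := t) n
  have eX : q^((n+1)*(3*(n+1)-1))
      = q^(n*(3*n-1)) * q^(2*n) * q^(2*n) * q^(2*n) * q^2 := by
    rw [exp_lem2, show n*(3*n-1)+(6*n+2) = n*(3*n-1)+2*n+2*n+2*n+2 from by ring]
    simp only [pow_add]
  -- u q t n
  have s1 : u q t n = (Poch2 q t n * t^n * q^(n*(3*n-1))
      * (1 - t*(q^(2*n)*q^(2*n)))) / P q n := by
    rw [u, show 4*n = 2*n+2*n from by ring, pow_add]
  -- (1+t) * u q (t*q^2) n
  have s2 : (1+t) * u q (t*q^2) n = (Poch2 q t n * (1+t*q^(2*n)) * (t^n*q^(2*n))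
      * q^(n*(3*n-1)) * (1 - t*q^2*(q^(2*n)*q^(2*n)))) / P q n := by
    have e5 : (t*q^2)^n * (1 - (t*q^2)*q^(4*n))
        = (t^n*q^(2*n)) * (1 - t*q^2*(q^(2*n)*q^(2*n))) := by
      rw [mul_pow, ← pow_mul, show 2*n = n*2 from by ring,
        show 4*n = n*2+n*2 from by ring, pow_add]
      try ring
    rw [u, ← mul_div_assoc]
    congr 1
    linear_combination ((t*q^2)^n * q^(n*(3*n-1)) * (1 - (t*q^2)*q^(4*n))) * hw
      + (Poch2 q t n * (1+t*q^(2*n)) * q^(n*(3*n-1))) * e5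
  have s3 : a q t n = (Poch2 q t n * t^n * q^(n*(3*n-1)) * (1 + q^(2*n))) / P q n := rfl
  have s4 : a q t (n+1) = (Poch2 q t n * (1+t*q^(2*n)) * (t^n * t)
      * (q^(n*(3*n-1)) * q^(2*n) * q^(2*n) * q^(2*n) * q^2)) / P q n := by
    rw [a, P_succ, show 2*(n+1) = 2*n+2 from by ring, e2n2, eX, Poch2_succ]
    rw [div_eq_div_iff (mul_ne_zero hPn hne2') hPn]
    ring
  rw [s1, s2, s3, s4, ← add_div, ← sub_div]
  congr 1
  ring

lemma R_fe {q : ℂ} (hq : ‖q‖ < 1) (t : ℂ) : R q t = 2 - (1+t) * R q (t*q^2) := by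
  have hu1 := summable_u hq t
  have hu2 := summable_u hq (t*q^2)
  have hsum : Summable (fun n => u q t n + (1+t) * u q (t*q^2) n) :=
    hu1.add (hu2.mul_left (1+t))
  have htel : ∀ N, ∑ n ∈ Finset.range N, (u q t n + (1+t) * u q (t*q^2) n)
      = a q t 0 - a q t N := by
    intro N
    rw [Finset.sum_congr rfl (fun n _ => key_step hq t n)]
    exact Finset.sum_range_sub' (a q t) N
  have haz := a_tendsto_zero hq t
  have hlim : Tendsto (fun N => ∑ n ∈ Finset.range N, (u q t n + (1+t) * u q (t*q^2) n))
      atTop (𝓝 (a q t 0)) := by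
    simp only [htel]
    have := (tendsto_const_nhds (x := a q t 0) (f := atTop (α := ℕ))).sub haz
    simpa using this
  have h2 : (∑' n, (u q t n + (1+t) * u q (t*q^2) n)) = a q t 0 :=
    tendsto_nhds_unique hsum.hasSum.tendsto_sum_nat hlim
  have ha0 : a q t 0 = 2 := by
    simp [a, Poch2, P]
    norm_num
  rw [Summable.tsum_add hu1 (hu2.mul_left (1+t)), tsum_mul_left] at h2
  rw [ha0] at h2
  rw [R, R]
  linear_combination h2

end Part3


namespace Part4
open Filter Topology Fth Part2 Part3

lemma D_iter {q : ℂ} (hq : ‖q‖ < 1) : ∀ (N : ℕ) (t : ℂ),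
    L q t - R q t = (-1)^N * Poch2 q t N
      * (L q (t * q^(2*N)) - R q (t * q^(2*N))) := by
  intro N
  induction N with
  | zero =>
    intro t
    simp [Poch2]
  | succ N ih =>
    intro t
    have h1 : L q t - R q t = -((1+t) * (L q (t*q^2) - R q (t*q^2))) := by
      rw [L_fe hq t, R_fe hq t]; ring
    rw [h1, ih (t*q^2)]
    have h2 : (t*q^2) * q^(2*N) = t * q^(2*(N+1)) := by
      rw [show 2*(N+1) = 2*N+2 from by ring, pow_add]; ring
    rw [h2]
    have h3 := Poch2_shift (q := q) (t := t) N
    rw [← Poch2_succ] at h3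
    linear_combination ((-1)^(N+1) * (L q (t*q^(2*(N+1))) - R q (t*q^(2*(N+1))))) * h3

noncomputable def CL (q : ℂ) : ℝ := ∑' k : ℕ, ‖q‖^((k+1)*((k+1)-1)) * ((1-‖q‖^2)⁻¹)^(k+1)
noncomputable def CR (q : ℂ) : ℝ := ∑' k : ℕ, 2^(k+2) * ‖q‖^((k+1)*(3*(k+1)-1)) * ((1-‖q‖^2)⁻¹)^(k+1)

lemma summable_CL {q : ℂ} (hq : ‖q‖ < 1) :
    Summable (fun k : ℕ => ‖q‖^((k+1)*((k+1)-1)) * ((1-‖q‖^2)⁻¹)^(k+1)) := by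
  have hc' := hc hq
  apply summable_aux (ρ := fun k => (‖q‖^2 * (1-‖q‖^2)⁻¹) * (‖q‖^2)^k)
  · intro k
    rw [exp_lem1 (k+1), pow_add, pow_succ, ← pow_mul,
      show 2*(k+1) = 2+k*2 from by ring, pow_add]
    ring
  · intro k; positivity
  · intro k; positivity
  · exact tendsto_pow_mul_zero (by positivity) (qsq_lt_one hq) _

lemma summable_CR {q : ℂ} (hq : ‖q‖ < 1) :
    Summable (fun k : ℕ => 2^(k+2) * ‖q‖^((k+1)*(3*(k+1)-1)) * ((1-‖q‖^2)⁻¹)^(k+1)) := by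
  have hc' := hc hq
  apply summable_aux (ρ := fun k => (2 * ‖q‖^8 * (1-‖q‖^2)⁻¹) * (‖q‖^6)^k)
  · intro k
    rw [exp_lem2 (k+1), pow_add, pow_succ, pow_succ, ← pow_mul,
      show 6*(k+1)+2 = 8+k*6 from by ring, pow_add]
    ring
  · intro k; positivity
  · intro k; positivity
  · have h6 : ‖q‖^6 < 1 := pow_lt_one₀ (norm_nonneg q) hq (by norm_num)
    exact tendsto_pow_mul_zero (by positivity) h6 _

lemma L_near_one {q : ℂ} (hq : ‖q‖ < 1) (s : ℂ) (hs : ‖s‖ ≤ 1) :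
    ‖L q s - 1‖ ≤ CL q * ‖s‖ := by
  have hf := summable_f hq s
  have h0 : L q s = f q s 0 + ∑' k, f q s (k+1) := Summable.tsum_eq_zero_add hf
  rw [h0, f_zero]
  have hbd : ∀ k : ℕ, ‖f q s (k+1)‖
      ≤ (‖q‖^((k+1)*((k+1)-1)) * ((1-‖q‖^2)⁻¹)^(k+1)) * ‖s‖ := by
    intro k
    have h1 : ‖f q s (k+1)‖ ≤ ‖(-1:ℂ)^(k+1) * q^((k+1)*((k+1)-1)) * s^(k+1)‖
        * ((1-‖q‖^2)⁻¹)^(k+1) := norm_div_P_le hq _ (k+1)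
    refine le_trans h1 ?_
    rw [norm_mul, norm_mul, norm_pow, norm_pow, norm_pow, norm_neg, norm_one, one_pow, one_mul]
    have h2 : ‖s‖^(k+1) ≤ ‖s‖ := by
      calc ‖s‖^(k+1) ≤ ‖s‖^1 := pow_le_pow_of_le_one (norm_nonneg s) hs (by omega)
      _ = ‖s‖ := pow_one _
    have hcn : (0:ℝ) ≤ ((1-‖q‖^2)⁻¹)^(k+1) := by
      have := hc hq; positivity
    calc ‖q‖^((k+1)*((k+1)-1)) * ‖s‖^(k+1) * ((1-‖q‖^2)⁻¹)^(k+1)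
        ≤ ‖q‖^((k+1)*((k+1)-1)) * ‖s‖ * ((1-‖q‖^2)⁻¹)^(k+1) := by
          apply mul_le_mul_of_nonneg_right _ hcn
          exact mul_le_mul_of_nonneg_left h2 (by positivity)
    _ = (‖q‖^((k+1)*((k+1)-1)) * ((1-‖q‖^2)⁻¹)^(k+1)) * ‖s‖ := by ring
  have hnorm_sum : Summable (fun k => ‖f q s (k+1)‖) := by
    apply Summable.of_nonneg_of_le (fun k => norm_nonneg _) hbd
    exact (summable_CL hq).mul_right ‖s‖
  calc ‖1 + (∑' k, f q s (k+1)) - 1‖ = ‖∑' k, f q s (k+1)‖ := by congr 1; ring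
  _ ≤ ∑' k, ‖f q s (k+1)‖ := norm_tsum_le_tsum_norm hnorm_sum
  _ ≤ ∑' k, (‖q‖^((k+1)*((k+1)-1)) * ((1-‖q‖^2)⁻¹)^(k+1)) * ‖s‖ :=
      Summable.tsum_le_tsum hbd hnorm_sum ((summable_CL hq).mul_right ‖s‖)
  _ = CL q * ‖s‖ := by rw [tsum_mul_right, CL]

lemma u_one_zero (q : ℂ) (s : ℂ) : u q s 0 = 1 - s := by
  simp [u, P, Poch2]

lemma R_near_one {q : ℂ} (hq : ‖q‖ < 1) (s : ℂ) (hs : ‖s‖ ≤ 1) :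
    ‖R q s - 1‖ ≤ (1 + CR q) * ‖s‖ := by
  have hu := summable_u hq s
  have h0 : R q s = u q s 0 + ∑' k, u q s (k+1) := Summable.tsum_eq_zero_add hu
  rw [h0, u_one_zero]
  have hbd : ∀ k : ℕ, ‖u q s (k+1)‖
      ≤ (2^(k+2) * ‖q‖^((k+1)*(3*(k+1)-1)) * ((1-‖q‖^2)⁻¹)^(k+1)) * ‖s‖ := by
    intro k
    refine le_trans (norm_u_le hq s (k+1)) ?_
    rw [U]
    have h1 : (1+‖s‖)^(k+1+1) ≤ 2^(k+2) := by
      apply pow_le_pow_left₀ (by positivity) (by linarith)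
    have h2 : ‖s‖^(k+1) ≤ ‖s‖ := by
      calc ‖s‖^(k+1) ≤ ‖s‖^1 := pow_le_pow_of_le_one (norm_nonneg s) hs (by omega)
      _ = ‖s‖ := pow_one _
    have hcn : (0:ℝ) ≤ ((1-‖q‖^2)⁻¹)^(k+1) := by
      have := hc hq; positivity
    calc (1+‖s‖)^(k+1+1) * ‖s‖^(k+1) * ‖q‖^((k+1)*(3*(k+1)-1)) * ((1-‖q‖^2)⁻¹)^(k+1)
        ≤ 2^(k+2) * ‖s‖ * ‖q‖^((k+1)*(3*(k+1)-1)) * ((1-‖q‖^2)⁻¹)^(k+1) := by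
          apply mul_le_mul_of_nonneg_right _ hcn
          apply mul_le_mul_of_nonneg_right _ (by positivity)
          exact mul_le_mul h1 h2 (by positivity) (by positivity)
    _ = (2^(k+2) * ‖q‖^((k+1)*(3*(k+1)-1)) * ((1-‖q‖^2)⁻¹)^(k+1)) * ‖s‖ := by ring
  have hnorm_sum : Summable (fun k => ‖u q s (k+1)‖) := by
    apply Summable.of_nonneg_of_le (fun k => norm_nonneg _) hbd
    exact (summable_CR hq).mul_right ‖s‖
  have hT : ‖∑' k, u q s (k+1)‖ ≤ CR q * ‖s‖ := by
    calc ‖∑' k, u q s (k+1)‖ ≤ ∑' k, ‖u q s (k+1)‖ := norm_tsum_le_tsum_norm hnorm_sum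
    _ ≤ ∑' k, (2^(k+2) * ‖q‖^((k+1)*(3*(k+1)-1)) * ((1-‖q‖^2)⁻¹)^(k+1)) * ‖s‖ :=
        Summable.tsum_le_tsum hbd hnorm_sum ((summable_CR hq).mul_right ‖s‖)
    _ = CR q * ‖s‖ := by rw [tsum_mul_right, CR]
  calc ‖1 - s + (∑' k, u q s (k+1)) - 1‖ = ‖-s + ∑' k, u q s (k+1)‖ := by congr 1; ring
  _ ≤ ‖(-s : ℂ)‖ + ‖∑' k, u q s (k+1)‖ := norm_add_le _ _
  _ ≤ ‖s‖ + CR q * ‖s‖ := by rw [norm_neg]; linarith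
  _ = (1 + CR q) * ‖s‖ := by ring

lemma Poch2_one_bound {q : ℂ} (hq : ‖q‖ < 1) (N : ℕ) :
    ‖Poch2 q 1 N‖ ≤ Real.exp ((1-‖q‖^2)⁻¹) := by
  have hc' := hc hq
  rw [Poch2, norm_prod]
  have h1 : ∀ j ∈ Finset.range N, ‖1 + (1:ℂ) * q^(2*j)‖ ≤ Real.exp ((‖q‖^2)^j) := by
    intro j _
    calc ‖1 + (1:ℂ) * q^(2*j)‖ ≤ ‖(1:ℂ)‖ + ‖(1:ℂ) * q^(2*j)‖ := norm_add_le _ _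
    _ = 1 + ‖q‖^(2*j) := by rw [norm_one, one_mul, norm_pow]
    _ = (‖q‖^2)^j + 1 := by rw [← pow_mul]; ring
    _ ≤ Real.exp ((‖q‖^2)^j) := Real.add_one_le_exp _
  calc ∏ j ∈ Finset.range N, ‖1 + (1:ℂ) * q^(2*j)‖
      ≤ ∏ j ∈ Finset.range N, Real.exp ((‖q‖^2)^j) :=
        Finset.prod_le_prod (fun j _ => norm_nonneg _) h1
  _ = Real.exp (∑ j ∈ Finset.range N, (‖q‖^2)^j) := (Real.exp_sum _ _).symm
  _ ≤ Real.exp ((1-‖q‖^2)⁻¹) := by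
      apply Real.exp_le_exp.2
      have hsum : Summable (fun j : ℕ => (‖q‖^2)^j) :=
        summable_geometric_of_lt_one (by positivity) (qsq_lt_one hq)
      calc ∑ j ∈ Finset.range N, (‖q‖^2)^j ≤ ∑' j : ℕ, (‖q‖^2)^j :=
            Summable.sum_le_tsum _ (fun j _ => by positivity) hsum
      _ = (1-‖q‖^2)⁻¹ := tsum_geometric_of_lt_one (by positivity) (qsq_lt_one hq)

lemma L_eq_R_one {q : ℂ} (hq : ‖q‖ < 1) : L q 1 = R q 1 := by
  have hc' := hc hq
  set K := Real.exp ((1-‖q‖^2)⁻¹) with hK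
  set C := CL q + (1 + CR q) with hC
  have hCL : 0 ≤ CL q := tsum_nonneg (fun k => by positivity)
  have hCR : 0 ≤ CR q := tsum_nonneg (fun k => by positivity)
  have hbound : ∀ N : ℕ, ‖L q 1 - R q 1‖ ≤ K * C * (‖q‖^2)^N := by
    intro N
    have h1 := D_iter hq N 1
    rw [one_mul] at h1
    have hnq : ‖q^(2*N)‖ ≤ 1 := by
      rw [norm_pow]
      exact pow_le_one₀ (norm_nonneg q) hq.le
    have h2 : ‖L q (q^(2*N)) - R q (q^(2*N))‖ ≤ C * (‖q‖^2)^N := by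
      have hL := L_near_one hq (q^(2*N)) hnq
      have hR := R_near_one hq (q^(2*N)) hnq
      have : ‖L q (q^(2*N)) - R q (q^(2*N))‖
          ≤ ‖L q (q^(2*N)) - 1‖ + ‖R q (q^(2*N)) - 1‖ := by
        have := norm_sub_le (L q (q^(2*N)) - 1) (R q (q^(2*N)) - 1)
        simpa using this
      have hq2 : ‖q^(2*N)‖ = (‖q‖^2)^N := by rw [norm_pow, ← pow_mul, mul_comm, pow_mul]
      rw [hq2] at hL hR
      calc ‖L q (q^(2*N)) - R q (q^(2*N))‖
          ≤ ‖L q (q^(2*N)) - 1‖ + ‖R q (q^(2*N)) - 1‖ := this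
      _ ≤ CL q * (‖q‖^2)^N + (1 + CR q) * (‖q‖^2)^N := by linarith
      _ = C * (‖q‖^2)^N := by rw [hC]; ring
    rw [h1, norm_mul, norm_mul, norm_pow, norm_neg, norm_one, one_pow, one_mul]
    have hP2 := Poch2_one_bound hq N
    calc ‖Poch2 q 1 N‖ * ‖L q (q^(2*N)) - R q (q^(2*N))‖
        ≤ K * (C * (‖q‖^2)^N) :=
          mul_le_mul hP2 h2 (norm_nonneg _) (Real.exp_nonneg _)
    _ = K * C * (‖q‖^2)^N := by ring
  have htend : Tendsto (fun N : ℕ => K * C * (‖q‖^2)^N) atTop (𝓝 0) :=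
    tendsto_pow_mul_zero (by positivity) (qsq_lt_one hq) _
  have hle : ‖L q 1 - R q 1‖ ≤ 0 := ge_of_tendsto' htend hbound
  have : L q 1 - R q 1 = 0 := by
    have := norm_le_zero_iff.1 hle
    exact this
  linear_combination this

end Part4


namespace Part5
open Filter Topology Fth Part2 Part3 Part4

lemma qPoch_eq_P (q : ℂ) (m : ℕ) : qPoch (-(q^2)) (q^2) m = P q m := by
  rw [qPoch, P]
  apply Finset.prod_congr rfl
  intro j _
  rw [show 2*j+2 = 2+j*2 from by ring, pow_add, ← pow_mul]
  ring

lemma u_one_succ {q : ℂ} (hq : ‖q‖ < 1) (n : ℕ) :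
    u q 1 (n+1) = 2 * q^((n+1)*(3*(n+1)-1)) * (1 - q^(2*n+2)) := by
  have hpoch : Poch2 q 1 (n+1) = 2 * P q n := by
    rw [Poch2, Finset.prod_range_succ', P]
    have h : ∀ j ∈ Finset.range n, (1 + (1:ℂ) * q^(2*(j+1))) = (1 + q^(2*j+2)) :=
      fun j _ => by rw [show 2*(j+1) = 2*j+2 from by ring]; ring
    rw [Finset.prod_congr rfl h]
    norm_num
    ring
  have h44 : q^(4*(n+1)) = q^(2*n+2) * q^(2*n+2) := by
    rw [← pow_add, show (2*n+2)+(2*n+2) = 4*(n+1) from by ring]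
  rw [u, hpoch, P_succ, h44, one_pow, mul_one]
  have h1 := P_ne hq n
  have h2 := one_add_pow_ne hq n
  field_simp
  ring

lemma exp_plus (n : ℕ) : 3*(n+1)^2 + (n+1) = (n+1)*(3*(n+1)-1) + (2*n+2) := by
  rw [show 3*(n+1)-1 = 3*n+2 from by omega]
  ring

lemma exp_minus (n : ℕ) : 3*(n+1)^2 - (n+1) = (n+1)*(3*(n+1)-1) := by
  rw [show 3*(n+1)-1 = 3*n+2 from by omega]
  have h : (n+1)*(3*n+2) + (n+1) = 3*(n+1)^2 := by ring
  omega

theorem main (q : ℂ) (hq : ‖q‖ < 1) :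
    ∑' n : ℕ, (-1 : ℂ) ^ n * q ^ (n * (n + 1)) / qPoch (-(q ^ 2)) (q ^ 2) (n + 1)
      = 1 + 2 * ∑' n : ℕ,
          (q ^ (3 * (n + 1) ^ 2 + (n + 1)) - q ^ (3 * (n + 1) ^ 2 - (n + 1))) := by
  -- LHS = 1 - L q 1
  have hterm : ∀ n : ℕ, (-1 : ℂ)^n * q^(n*(n+1)) / qPoch (-(q^2)) (q^2) (n+1)
      = -(f q 1 (n+1)) := by
    intro n
    rw [qPoch_eq_P, f, show (n+1)*((n+1)-1) = n*(n+1) from by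
      simp only [Nat.add_sub_cancel]; ring]
    rw [one_pow, mul_one, pow_succ]
    ring
  have hf := summable_f hq 1
  have hL : ∑' n : ℕ, (-1 : ℂ)^n * q^(n*(n+1)) / qPoch (-(q^2)) (q^2) (n+1)
      = 1 - L q 1 := by
    rw [tsum_congr hterm, tsum_neg]
    have h0 : L q 1 = f q 1 0 + ∑' k, f q 1 (k+1) := Summable.tsum_eq_zero_add hf
    rw [f_zero] at h0
    rw [show ∑' k, f q 1 (k+1) = L q 1 - 1 from by rw [h0]; ring]
    ring
  -- RHS series = -(1/2) * u q 1 (n+1)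
  have hv : ∀ n : ℕ, (q ^ (3*(n+1)^2 + (n+1)) - q ^ (3*(n+1)^2 - (n+1)) : ℂ)
      = (-(1:ℂ)/2) * u q 1 (n+1) := by
    intro n
    rw [u_one_succ hq n, exp_plus, exp_minus, pow_add]
    ring
  have hu := summable_u hq 1
  have hR : R q 1 = ∑' k, u q 1 (k+1) := by
    have h0 : R q 1 = u q 1 0 + ∑' k, u q 1 (k+1) := Summable.tsum_eq_zero_add hu
    rw [u_one_zero] at h0
    rw [h0]
    ring
  have hRHS : ∑' n : ℕ, (q ^ (3*(n+1)^2 + (n+1)) - q ^ (3*(n+1)^2 - (n+1)) : ℂ)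
      = (-(1:ℂ)/2) * R q 1 := by
    rw [tsum_congr hv, tsum_mul_left, hR]
  rw [hL, hRHS, L_eq_R_one hq]
  ring

end Part5

/-- False theta function identity \eqref{fth}. -/
theorem stmt_17 (q : ℂ) (hq : ‖q‖ < 1) :
    ∑' n : ℕ, (-1 : ℂ) ^ n * q ^ (n * (n + 1)) / qPoch (-(q ^ 2)) (q ^ 2) (n + 1)
      = 1 + 2 * ∑' n : ℕ,
          (q ^ (3 * (n + 1) ^ 2 + (n + 1)) - q ^ (3 * (n + 1) ^ 2 - (n + 1))) := Part5.main q hq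
end
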